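/- Let (X,d) be a proper geodesic δ-hyperbolic space with a pole. If the Gromov boundary ∂X is uniformly perfect, then X is geodesically rich. -/

import Mathlib

open Metric Filter Set

namespace BoundaryRigidity

universe u

open Topology

variable {X : Type*} {Y : Type*}

/-- The Gromov product of `x` and `y` with respect to the base point `w`. -/
noncomputable def gp [MetricSpace X] (w x y : X) : ℝ :=
  (dist x w + dist y w - dist x y) / 2

/-- A Gromov sequence: `(x_i | x_j)_w → ∞` as `i, j → ∞` (for every base point,
the condition being base-point independent). -/
def IsGromovSeq [MetricSpace X] (u : ℕ → X) : Prop :=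
  ∀ w : X, Tendsto (fun p : ℕ × ℕ => gp w (u p.1) (u p.2)) atTop atTop

/-- Two Gromov sequences are equivalent if `(x_i | y_i)_w → ∞`. -/
def GromovEquiv [MetricSpace X] (u v : ℕ → X) : Prop :=
  IsGromovSeq u ∧ IsGromovSeq v ∧
    ∀ w : X, Tendsto (fun i => gp w (u i) (v i)) atTop atTop

/-- `γ` is a geodesic (unit-speed) parametrization on the interval `[a, b]`. -/
def IsGeodSegment [MetricSpace X] (γ : ℝ → X) (a b : ℝ) : Prop :=
  ∀ s ∈ Icc a b, ∀ t ∈ Icc a b, dist (γ s) (γ t) = |s - t|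

/-- A geodesic metric space: any two points are joined by a geodesic. -/
def GeodesicSpace (X : Type*) [MetricSpace X] : Prop :=
  ∀ x y : X, ∃ γ : ℝ → X, IsGeodSegment γ 0 (dist x y) ∧ γ 0 = x ∧ γ (dist x y) = y

/-- δ-hyperbolicity (Rips condition): every point on an edge of a geodesic triangle is
within `δ` of the union of the other two edges. -/
def DeltaHyp (X : Type*) [MetricSpace X] (δ : ℝ) : Prop :=
  ∀ (γ₁ γ₂ γ₃ : ℝ → X) (a₁ b₁ a₂ b₂ a₃ b₃ : ℝ),
    IsGeodSegment γ₁ a₁ b₁ → IsGeodSegment γ₂ a₂ b₂ → IsGeodSegment γ₃ a₃ b₃ →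
    a₁ ≤ b₁ → a₂ ≤ b₂ → a₃ ≤ b₃ →
    γ₁ a₁ = γ₃ a₃ → γ₁ b₁ = γ₂ a₂ → γ₂ b₂ = γ₃ b₃ →
    ∀ s ∈ Icc a₁ b₁, ∃ p : X,
      ((∃ t ∈ Icc a₂ b₂, p = γ₂ t) ∨ (∃ t ∈ Icc a₃ b₃, p = γ₃ t)) ∧ dist (γ₁ s) p ≤ δ

/-- A point of `X̄ = X ∪ ∂X`: an interior point, or a boundary point represented
by a Gromov sequence. -/
def IsXBarPt [MetricSpace X] : X ⊕ (ℕ → X) → Prop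
  | Sum.inl _ => True
  | Sum.inr u => IsGromovSeq u

/-- The left end of the curve `γ` (restricted to `I`) is the point `p` of `X̄`:
either `γ` attains the interior point at the minimum of `I`, or `I` is unbounded
below and `γ` converges at `-∞` to the given boundary point. -/
def LeftEnd [MetricSpace X] (γ : ℝ → X) (I : Set ℝ) : X ⊕ (ℕ → X) → Prop
  | Sum.inl a => ∃ s ∈ I, γ s = a ∧ ∀ t ∈ I, s ≤ t
  | Sum.inr u => ∃ σ : ℕ → ℝ, (∀ n, σ n ∈ I) ∧ Tendsto σ atTop atBot ∧
      GromovEquiv (fun n => γ (σ n)) u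

/-- The right end of the curve `γ` (restricted to `I`) is the point `p` of `X̄`. -/
def RightEnd [MetricSpace X] (γ : ℝ → X) (I : Set ℝ) : X ⊕ (ℕ → X) → Prop
  | Sum.inl a => ∃ s ∈ I, γ s = a ∧ ∀ t ∈ I, t ≤ s
  | Sum.inr u => ∃ σ : ℕ → ℝ, (∀ n, σ n ∈ I) ∧ Tendsto σ atTop atTop ∧
      GromovEquiv (fun n => γ (σ n)) u

/-- `γ` restricted to the interval `I` is a geodesic joining `p` to `q` in `X̄`. -/
def IsGeodJoining [MetricSpace X] (γ : ℝ → X) (I : Set ℝ) (p q : X ⊕ (ℕ → X)) : Prop :=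
  I.Nonempty ∧ I.OrdConnected ∧ (∀ s ∈ I, ∀ t ∈ I, dist (γ s) (γ t) = |s - t|) ∧
    LeftEnd γ I p ∧ RightEnd γ I q

/-- `γ` restricted to the interval `I` is a `(K, C)`-quasi-geodesic joining `p` to `q`. -/
def IsQGeodJoining [MetricSpace X] (K C : ℝ) (γ : ℝ → X) (I : Set ℝ)
    (p q : X ⊕ (ℕ → X)) : Prop :=
  I.Nonempty ∧ I.OrdConnected ∧
    (∀ s ∈ I, ∀ t ∈ I, K⁻¹ * |s - t| - C ≤ dist (γ s) (γ t) ∧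
      dist (γ s) (γ t) ≤ K * |s - t| + C) ∧
    LeftEnd γ I p ∧ RightEnd γ I q

/-- `x` is a `(K, C, ρ)`-quasi-centroid of the triple `p₁, p₂, p₃ ∈ X̄`. -/
def IsQuasiCentroid [MetricSpace X] (K C ρ : ℝ) (x : X) (p₁ p₂ p₃ : X ⊕ (ℕ → X)) : Prop :=
  ∃ (γ₁ γ₂ γ₃ : ℝ → X) (I₁ I₂ I₃ : Set ℝ),
    IsQGeodJoining K C γ₁ I₁ p₁ p₂ ∧ IsQGeodJoining K C γ₂ I₂ p₂ p₃ ∧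
      IsQGeodJoining K C γ₃ I₃ p₁ p₃ ∧
      (∃ s ∈ I₁, dist x (γ₁ s) ≤ ρ) ∧ (∃ s ∈ I₂, dist x (γ₂ s) ≤ ρ) ∧
      (∃ s ∈ I₃, dist x (γ₃ s) ≤ ρ)

/-- `Δ_{(K,C,ρ)}(∂X)`: all `(K,C,ρ)`-quasi-centroids of triples of boundary points. -/
def centroidSetBdry (X : Type*) [MetricSpace X] (K C ρ : ℝ) : Set X :=
  {x | ∃ u₁ u₂ u₃ : ℕ → X, IsGromovSeq u₁ ∧ IsGromovSeq u₂ ∧ IsGromovSeq u₃ ∧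
    IsQuasiCentroid K C ρ x (Sum.inr u₁) (Sum.inr u₂) (Sum.inr u₃)}

/-- `E` is `M`-roughly full in `X`. -/
def RoughlyFull [MetricSpace X] (E : Set X) (M : ℝ) : Prop :=
  ∀ x : X, ∃ e ∈ E, dist x e ≤ M

/-- `(K, C)`-quasi-isometric embedding. -/
def IsQIEmbedding [MetricSpace X] [MetricSpace Y] (K C : ℝ) (f : X → Y) : Prop :=
  1 ≤ K ∧ 0 ≤ C ∧ ∀ x y : X,
    K⁻¹ * dist x y - C ≤ dist (f x) (f y) ∧ dist (f x) (f y) ≤ K * dist x y + C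

/-- `(K, C)`-quasi-isometry. -/
def IsQuasiIsometry [MetricSpace X] [MetricSpace Y] (K C : ℝ) (f : X → Y) : Prop :=
  IsQIEmbedding K C f ∧ ∀ y : Y, ∃ x : X, dist y (f x) ≤ C

/-- `X` is boundary rigid: every self quasi-isometry inducing the identity map on the
Gromov boundary (i.e. sending every Gromov sequence to an equivalent one) has finite
displacement. -/
def BoundaryRigid (X : Type*) [MetricSpace X] : Prop :=
  ∀ (K C : ℝ) (f : X → X), IsQuasiIsometry K C f →
    (∀ u : ℕ → X, IsGromovSeq u → GromovEquiv u (f ∘ u)) →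
    ∃ M : ℝ, ∀ x : X, dist x (f x) ≤ M

/-- `o ∈ X̄` is an `L`-pole: every point of `X` lies within `L` of some geodesic
from `o` to some boundary point. -/
def PoleAt [MetricSpace X] (L : ℝ) (o : X ⊕ (ℕ → X)) : Prop :=
  IsXBarPt o ∧ ∀ x : X, ∃ (γ : ℝ → X) (I : Set ℝ) (v : ℕ → X), IsGromovSeq v ∧
    IsGeodJoining γ I o (Sum.inr v) ∧ ∃ s ∈ I, dist x (γ s) ≤ L

/-- `X` has a pole. -/
def HasPole (X : Type*) [MetricSpace X] : Prop :=
  ∃ (L : ℝ) (o : X ⊕ (ℕ → X)), 0 ≤ L ∧ PoleAt L o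

/-- `ρ_{w,ε}` on boundary classes: `e^{-ε (ξ|ζ)_w}` where the Gromov product of two
boundary points is the infimum over representatives of the liminf of Gromov products;
equivalently the sup over representatives of the limsup of `e^{-ε (x_i|y_i)_w}`. -/
noncomputable def visRho [MetricSpace X] (w : X) (ε : ℝ) (u v : ℕ → X) : ℝ :=
  sSup {t | ∃ u' v' : ℕ → X, GromovEquiv u u' ∧ GromovEquiv v v' ∧
    t = Filter.limsup (fun i => Real.exp (-ε * gp w (u' i) (v' i))) atTop}

/-- The visual metric `d_{w,ε}` on boundary classes, as a chain infimum of `ρ_{w,ε}`. -/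
noncomputable def visDist [MetricSpace X] (w : X) (ε : ℝ) (u v : ℕ → X) : ℝ :=
  sInf {s | ∃ (n : ℕ) (c : ℕ → ℕ → X), 1 ≤ n ∧ (∀ i, i ≤ n → IsGromovSeq (c i)) ∧
    GromovEquiv (c 0) u ∧ GromovEquiv (c n) v ∧
    s = ∑ i ∈ Finset.range n, visRho w ε (c i) (c (i + 1))}

/-- The Gromov boundary of `X` (with any visual metric whose parameters are admissible
for `δ`) is uniformly perfect. -/
def BoundaryUniformlyPerfect (X : Type*) [MetricSpace X] (δ : ℝ) : Prop :=
  ∀ (w : X) (ε : ℝ), 0 < ε → ε < 1 → ε * (5 * δ) < 1 →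
    ∃ S : ℝ, 1 ≤ S ∧ ∃ r₀ : ℝ, 0 < r₀ ∧
      ∀ u : ℕ → X, IsGromovSeq u → ∀ r : ℝ, 0 < r → r ≤ r₀ →
        ∃ v : ℕ → X, IsGromovSeq v ∧ r / S < visDist w ε u v ∧ visDist w ε u v ≤ r

/-- Bi-infinite geodesic. -/
def IsBiInfGeod [MetricSpace X] (γ : ℝ → X) : Prop :=
  ∀ s t : ℝ, dist (γ s) (γ t) = |s - t|

/-- Distance between (the images of) two bi-infinite geodesics. -/
noncomputable def lineDist [MetricSpace X] (γ γ' : ℝ → X) : ℝ :=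
  sInf {r | ∃ s t : ℝ, r = dist (γ s) (γ' t)}

/-- First condition in the definition of geodesic richness. -/
def RichCondOne (X : Type*) [MetricSpace X] (r₀ r₁ r₂ : ℝ) : Prop :=
  ∀ p q : X, r₀ ≤ dist p q → ∃ γ : ℝ → X, IsBiInfGeod γ ∧
    infDist p (range γ) < r₁ ∧ |infDist q (range γ) - dist p q| < r₂

/-- Second condition in the definition of geodesic richness. -/
def RichCondTwo (X : Type*) [MetricSpace X] (r₃ r₄ : ℝ) : Prop :=
  ∀ γ : ℝ → X, IsBiInfGeod γ → ∀ p : X, ∃ γ' : ℝ → X, IsBiInfGeod γ' ∧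
    infDist p (range γ') < r₃ ∧ |infDist p (range γ) - lineDist γ' γ| < r₄

/-- Geodesically rich space. -/
def GeodesicallyRich (X : Type*) [MetricSpace X] : Prop :=
  ∃ r₀ r₁ r₂ r₃ r₄ : ℝ, RichCondOne X r₀ r₁ r₂ ∧ RichCondTwo X r₃ r₄

/-- Every closest-point projection of `x` to the geodesic segment `γ|_{[a,b]}`
lies within `R` of the point `c`. -/
def segProjIn [MetricSpace X] (γ : ℝ → X) (a b : ℝ) (x c : X) (R : ℝ) : Prop :=
  ∀ s ∈ Icc a b, (∀ t ∈ Icc a b, dist x (γ s) ≤ dist x (γ t)) → dist (γ s) c ≤ R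

/-- Projection to a geodesic `[y,z]` (parametrized by `γ` on `I`): the set of closest
points for interior `x`, and the set of `(1,0,3δ)`-quasi-centroids of `{x,y,z}` for
boundary `x`. -/
def projSet [MetricSpace X] (δ : ℝ) (γ : ℝ → X) (I : Set ℝ) (y z : X ⊕ (ℕ → X)) :
    X ⊕ (ℕ → X) → Set X
  | Sum.inl a => {p | ∃ s ∈ I, p = γ s ∧ ∀ t ∈ I, dist a (γ s) ≤ dist a (γ t)}
  | Sum.inr u => {p | IsQuasiCentroid 1 0 (3 * δ) p (Sum.inr u) y z}

section Basic
variable [MetricSpace X]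

lemma gp_nonneg (w x y : X) : 0 ≤ gp w x y := by
  have := dist_triangle x w y
  simp only [gp]
  rw [dist_comm y w] at *
  linarith

lemma gp_le_left (w x y : X) : gp w x y ≤ dist x w := by
  have h := dist_triangle y x w
  simp only [gp]
  rw [dist_comm y x] at h
  linarith

lemma gp_comm (w x y : X) : gp w x y = gp w y x := by
  simp only [gp, dist_comm x y]; ring

lemma gp_le_right (w x y : X) : gp w x y ≤ dist y w := by
  rw [gp_comm]; exact gp_le_left w y x

lemma gp_base_switch (w p x : X) : gp w p x + gp p w x = dist w p := by
  simp only [gp, dist_comm w p, dist_comm x p, dist_comm w x]; ring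

lemma gp_lipschitz (w x x' y : X) : gp w x y ≤ gp w x' y + dist x x' := by
  have h1 := dist_triangle x x' w
  have h2 := dist_triangle x' x y
  simp only [gp]
  rw [dist_comm x' x] at h2
  linarith

lemma dist_eq_gp (p q z : X) : dist q z = dist q p + dist p z - 2 * gp p q z := by
  simp only [gp, dist_comm z p]; ring

end Basic




section Rips
variable [MetricSpace X] {δ : ℝ}

lemma geod_dists {σ : ℝ → X} {x z : X} (hσ : IsGeodSegment σ 0 (dist x z))
    (h0 : σ 0 = x) (h1 : σ (dist x z) = z) {t : ℝ} (ht : t ∈ Icc (0:ℝ) (dist x z)) :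
    dist x (σ t) = t ∧ dist z (σ t) = dist x z - t := by
  constructor
  · have h := hσ 0 ⟨le_refl _, dist_nonneg⟩ t ht
    rw [h0] at h
    rw [h, abs_of_nonpos (by linarith [ht.1])]; ring
  · have h := hσ (dist x z) ⟨dist_nonneg, le_refl _⟩ t ht
    rw [h1] at h
    rw [h, abs_of_nonneg (by linarith [ht.2])]

/-- On a geodesic from x to z, any point has dist to w at least gp w x z. -/
lemma gp_le_geod {σ : ℝ → X} {x z : X} (hσ : IsGeodSegment σ 0 (dist x z))
    (h0 : σ 0 = x) (h1 : σ (dist x z) = z) {t : ℝ} (ht : t ∈ Icc (0:ℝ) (dist x z))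
    (w : X) : gp w x z ≤ dist w (σ t) := by
  obtain ⟨hx, hz⟩ := geod_dists hσ h0 h1 ht
  have h2 := dist_triangle x (σ t) w
  have h3 := dist_triangle z (σ t) w
  simp only [gp]
  linarith [h2, h3, hx, hz, dist_comm (σ t) w, dist_comm w (σ t)]

/-- there is a point on a geodesic from x to z within gp w x z + 2δ of w -/
lemma exists_near_gp (hδ : 0 ≤ δ) (hgeo : GeodesicSpace X) (hhyp : DeltaHyp X δ)
    {σ : ℝ → X} {x z : X} (hσ : IsGeodSegment σ 0 (dist x z))
    (h0 : σ 0 = x) (h1 : σ (dist x z) = z) (w : X) :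
    ∃ t ∈ Icc (0:ℝ) (dist x z), dist w (σ t) ≤ gp w x z + 2 * δ := by
  obtain ⟨γ₂, hγ₂, hγ₂0, hγ₂1⟩ := hgeo z w
  obtain ⟨γ₃, hγ₃, hγ₃0, hγ₃1⟩ := hgeo x w
  set t₀ : ℝ := gp x z w with ht₀
  have ht₀mem : t₀ ∈ Icc (0:ℝ) (dist x z) :=
    ⟨gp_nonneg _ _ _, by rw [dist_comm x z]; exact gp_le_left x z w⟩
  obtain ⟨p, hp, hdp⟩ := hhyp σ γ₂ γ₃ 0 (dist x z) 0 (dist z w) 0 (dist x w) hσ hγ₂ hγ₃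
    dist_nonneg dist_nonneg dist_nonneg (by rw [h0, hγ₃0]) (by rw [h1, hγ₂0])
    (by rw [hγ₂1, hγ₃1]) t₀ ht₀mem
  refine ⟨t₀, ht₀mem, ?_⟩
  obtain ⟨hxm, hzm⟩ := geod_dists hσ h0 h1 ht₀mem
  have ht₀' : t₀ = (dist z x + dist w x - dist z w) / 2 := ht₀
  rcases hp with ⟨t, htmem, rfl⟩ | ⟨t, htmem, rfl⟩
  · obtain ⟨hzp, hwp⟩ := geod_dists hγ₂ hγ₂0 hγ₂1 htmem
    have h4 := dist_triangle w (γ₂ t) (σ t₀)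
    have h5 := dist_triangle z (γ₂ t) (σ t₀)
    simp only [gp]
    linarith [h4, h5, hwp, hzp, hzm, hdp, ht₀',
      dist_comm (σ t₀) (γ₂ t), dist_comm w (σ t₀), dist_comm z x, dist_comm w x,
      dist_comm x z, dist_comm z w, dist_comm x w]
  · obtain ⟨hxp, hwp⟩ := geod_dists hγ₃ hγ₃0 hγ₃1 htmem
    have h4 := dist_triangle w (γ₃ t) (σ t₀)
    have h5 := dist_triangle x (γ₃ t) (σ t₀)
    simp only [gp]
    linarith [h4, h5, hwp, hxp, hxm, hdp, ht₀',
      dist_comm (σ t₀) (γ₃ t), dist_comm w (σ t₀), dist_comm z x, dist_comm w x,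
      dist_comm x z, dist_comm z w, dist_comm x w]

/-- hyperbolic inequality for Gromov products, constant 3δ -/
lemma gp_min (hδ : 0 ≤ δ) (hgeo : GeodesicSpace X) (hhyp : DeltaHyp X δ)
    (w x y z : X) : min (gp w x y) (gp w y z) - 3 * δ ≤ gp w x z := by
  obtain ⟨σ, hσ, h0, h1⟩ := hgeo x z
  obtain ⟨t₀, ht₀, hnear⟩ := exists_near_gp hδ hgeo hhyp hσ h0 h1 w
  obtain ⟨γ₂, hγ₂, hγ₂0, hγ₂1⟩ := hgeo z y
  obtain ⟨γ₃, hγ₃, hγ₃0, hγ₃1⟩ := hgeo x y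
  obtain ⟨p, hp, hdp⟩ := hhyp σ γ₂ γ₃ 0 (dist x z) 0 (dist z y) 0 (dist x y) hσ hγ₂ hγ₃
    dist_nonneg dist_nonneg dist_nonneg (by rw [h0, hγ₃0]) (by rw [h1, hγ₂0])
    (by rw [hγ₂1, hγ₃1]) t₀ ht₀
  have hwp : min (gp w x y) (gp w y z) ≤ dist w p := by
    rcases hp with ⟨t, htmem, rfl⟩ | ⟨t, htmem, rfl⟩
    · refine le_trans (min_le_right _ _) ?_
      rw [gp_comm]
      exact gp_le_geod hγ₂ hγ₂0 hγ₂1 htmem w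
    · exact le_trans (min_le_left _ _) (gp_le_geod hγ₃ hγ₃0 hγ₃1 htmem w)
  have h6 := dist_triangle w (σ t₀) p
  linarith

end Rips



section Seq
variable [MetricSpace X]

lemma gp_self [MetricSpace X] (w x : X) : gp w x x = dist x w := by simp [gp]

lemma grom_pairs {u : ℕ → X} (hu : IsGromovSeq u) (w : X) (M : ℝ) :
    ∃ N, ∀ j k, N ≤ j → N ≤ k → M ≤ gp w (u j) (u k) := by
  obtain ⟨N, hN⟩ := (eventually_atTop).mp ((hu w).eventually_ge_atTop M)
  refine ⟨max N.1 N.2, fun j k hj hk => hN (j, k) ?_⟩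
  exact ⟨le_trans (le_max_left _ _) hj, le_trans (le_max_right _ _) hk⟩

lemma grom_diag {u : ℕ → X} (hu : IsGromovSeq u) (w : X) (M : ℝ) :
    ∃ N, ∀ i ≥ N, M ≤ dist (u i) w := by
  obtain ⟨N, hN⟩ := grom_pairs hu w M
  exact ⟨N, fun i hi => by rw [← gp_self w (u i)]; exact hN i i hi hi⟩

lemma equiv_diag {u v : ℕ → X} (h : GromovEquiv u v) (w : X) (M : ℝ) :
    ∃ N, ∀ i ≥ N, M ≤ gp w (u i) (v i) :=
  eventually_atTop.mp ((h.2.2 w).eventually_ge_atTop M)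

/-- equivalent sequences have large mutual products at all deep pairs -/
lemma equiv_pairs {δ : ℝ} (hδ : 0 ≤ δ) (hgeo : GeodesicSpace X) (hhyp : DeltaHyp X δ)
    {u v : ℕ → X} (h : GromovEquiv u v) (w : X) (M : ℝ) :
    ∃ N, ∀ j k, N ≤ j → N ≤ k → M ≤ gp w (u j) (v k) := by
  obtain ⟨N₁, hN₁⟩ := grom_pairs h.1 w (M + 3 * δ)
  obtain ⟨N₂, hN₂⟩ := equiv_diag h w (M + 3 * δ)
  refine ⟨max N₁ N₂, fun j k hj hk => ?_⟩
  have h1 := gp_min hδ hgeo hhyp w (u j) (u k) (v k)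
  have h2 := hN₁ j k (le_trans (le_max_left _ _) hj) (le_trans (le_max_left _ _) hk)
  have h3 := hN₂ k (le_trans (le_max_right _ _) hk)
  have := min_le_min h2 h3
  rw [min_self] at this
  linarith [le_min h2 h3]

end Seq

section Ev
variable [MetricSpace X] {δ : ℝ}

/-- eventual upper bound on mutual Gromov products of two sequences -/
def EvB [MetricSpace X] (w : X) (a b : ℕ → X) (B : ℝ) : Prop :=
  ∃ N, ∀ j k, N ≤ j → N ≤ k → gp w (a j) (b k) ≤ B

/-- eventual lower bound -/
def EvL [MetricSpace X] (w : X) (a b : ℕ → X) (B : ℝ) : Prop :=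
  ∃ N, ∀ j k, N ≤ j → N ≤ k → B ≤ gp w (a j) (b k)

lemma EvB.symm {w : X} {a b : ℕ → X} {B : ℝ} (h : EvB w a b B) : EvB w b a B := by
  obtain ⟨N, hN⟩ := h
  exact ⟨N, fun j k hj hk => by rw [gp_comm]; exact hN k j hk hj⟩

lemma EvL.symm {w : X} {a b : ℕ → X} {B : ℝ} (h : EvL w a b B) : EvL w b a B := by
  obtain ⟨N, hN⟩ := h
  exact ⟨N, fun j k hj hk => by rw [gp_comm]; exact hN k j hk hj⟩

lemma EvB.mono {w : X} {a b : ℕ → X} {B B' : ℝ} (h : EvB w a b B) (hB : B ≤ B') :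
    EvB w a b B' := by
  obtain ⟨N, hN⟩ := h; exact ⟨N, fun j k hj hk => le_trans (hN j k hj hk) hB⟩

lemma EvL.mono {w : X} {a b : ℕ → X} {B B' : ℝ} (h : EvL w a b B) (hB : B' ≤ B) :
    EvL w a b B' := by
  obtain ⟨N, hN⟩ := h; exact ⟨N, fun j k hj hk => le_trans hB (hN j k hj hk)⟩

variable (hδ : 0 ≤ δ) (hgeo : GeodesicSpace X) (hhyp : DeltaHyp X δ)
include hδ hgeo hhyp

lemma chain_low {w : X} {a b c : ℕ → X} {α β : ℝ}
    (hab : EvL w a b α) (hbc : EvL w b c β) : EvL w a c (min α β - 3 * δ) := by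
  obtain ⟨N₁, h₁⟩ := hab
  obtain ⟨N₂, h₂⟩ := hbc
  set k₀ := max N₁ N₂
  refine ⟨k₀, fun j k hj hk => ?_⟩
  have h3 := gp_min hδ hgeo hhyp w (a j) (b k₀) (c k)
  have h4 := h₁ j k₀ (le_trans (le_max_left _ _) hj) (le_max_left _ _)
  have h5 := h₂ k₀ k (le_max_right _ _) (le_trans (le_max_right _ _) hk)
  have hm : min α β ≤ min (gp w (a j) (b k₀)) (gp w (b k₀) (c k)) :=
    le_min (le_trans (min_le_left α β) h4) (le_trans (min_le_right α β) h5)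
  linarith

lemma chain_up {w : X} {a b c : ℕ → X} {G E : ℝ}
    (hab : EvB w a b G) (hcb : EvL w c b E) (hE : G + 3 * δ < E) : EvB w a c (G + 3 * δ) := by
  obtain ⟨N₁, h₁⟩ := hab
  obtain ⟨N₂, h₂⟩ := hcb
  set k₀ := max N₁ N₂
  refine ⟨k₀, fun j k hj hk => ?_⟩
  by_contra hcon
  push_neg at hcon
  have h3 := gp_min hδ hgeo hhyp w (a j) (c k) (b k₀)
  have h4 := h₁ j k₀ (le_trans (le_max_left _ _) hj) (le_max_left _ _)
  have h5 := h₂ k k₀ (le_trans (le_max_right _ _) hk) (le_max_right _ _)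
  have hmin : G < min (gp w (a j) (c k)) (gp w (c k) (b k₀)) - 3*δ := by
    rcases le_total (gp w (a j) (c k)) (gp w (c k) (b k₀)) with hle | hle
    · rw [min_eq_left hle]; linarith
    · rw [min_eq_right hle]; linarith
  linarith

/-- frequently small pairs imply eventually small pairs -/
lemma nc_up {w : X} {u v : ℕ → X} (hu : IsGromovSeq u) (hv : IsGromovSeq v) {c : ℝ}
    (hfreq : ∀ N, ∃ j k, N ≤ j ∧ N ≤ k ∧ gp w (u j) (v k) ≤ c) : EvB w u v (c + 6 * δ) := by
  obtain ⟨N₁, h₁⟩ := grom_pairs hu w (c + 9 * δ + 1)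
  obtain ⟨N₂, h₂⟩ := grom_pairs hv w (c + 9 * δ + 1)
  set N := max N₁ N₂
  obtain ⟨j₀, k₀, hj₀, hk₀, hsmall⟩ := hfreq N
  refine ⟨N, fun j k hj hk => ?_⟩
  by_contra hcon
  push_neg at hcon
  have hA := gp_min hδ hgeo hhyp w (u j₀) (u j) (v k₀)
  have hB := gp_min hδ hgeo hhyp w (u j) (v k) (v k₀)
  have hfact1 := h₁ j₀ j (le_trans (le_max_left _ _) hj₀) (le_trans (le_max_left _ _) hj)
  have hfact2 := h₂ k k₀ (le_trans (le_max_right _ _) hk) (le_trans (le_max_right _ _) hk₀)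
  have hstep1 : c + 3*δ < gp w (u j) (v k₀) := by
    have : c + 6*δ < min (gp w (u j) (v k)) (gp w (v k) (v k₀)) := by
      rcases le_total (gp w (u j) (v k)) (gp w (v k) (v k₀)) with hle | hle
      · rw [min_eq_left hle]; linarith
      · rw [min_eq_right hle]; linarith
    linarith
  have hstep2 : c < gp w (u j₀) (v k₀) := by
    have : c + 3*δ < min (gp w (u j₀) (u j)) (gp w (u j) (v k₀)) := by
      rcases le_total (gp w (u j₀) (u j)) (gp w (u j) (v k₀)) with hle | hle
      · rw [min_eq_left hle]; linarith
      · rw [min_eq_right hle]; linarith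
    linarith
  linarith

/-- eventually-large diagonal implies eventually-large pairs -/
lemma nc_down {w : X} {u v : ℕ → X} (hu : IsGromovSeq u) (hv : IsGromovSeq v) {c : ℝ}
    (hdiag : ∃ N, ∀ i ≥ N, c ≤ gp w (u i) (v i)) : EvL w u v (c - 6 * δ) := by
  obtain ⟨N₀, h₀⟩ := hdiag
  obtain ⟨N₁, h₁⟩ := grom_pairs hu w c
  obtain ⟨N₂, h₂⟩ := grom_pairs hv w c
  set i₀ := max N₀ (max N₁ N₂)
  refine ⟨i₀, fun j k hj hk => ?_⟩
  have hA := gp_min hδ hgeo hhyp w (u j) (u i₀) (v k)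
  have hB := gp_min hδ hgeo hhyp w (u i₀) (v i₀) (v k)
  have hf0 := h₀ i₀ (le_max_left _ _)
  have hf1 := h₁ j i₀ (le_trans ((le_max_left _ _).trans (le_max_right _ _)) hj)
    ((le_max_left _ _).trans (le_max_right _ _))
  have hf2 := h₂ i₀ k ((le_max_right _ _).trans (le_max_right _ _))
    (le_trans ((le_max_right _ _).trans (le_max_right _ _)) hk)
  have s1 : c - 3*δ ≤ gp w (u i₀) (v k) := by
    have := le_min hf0 hf2; linarith [min_le_min hf0 hf2]
  have s2 : min c (c - 3*δ) ≤ min (gp w (u j) (u i₀)) (gp w (u i₀) (v k)) :=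
    min_le_min hf1 s1
  have : min c (c - 3*δ) = c - 3*δ := min_eq_right (by linarith)
  linarith [this ▸ s2]

/-- transfer a lower bound against a fixed point through an equivalence -/
lemma evl_transfer {w p : X} {a b : ℕ → X} {c : ℝ}
    (h : ∃ N, ∀ n ≥ N, c ≤ gp w p (a n)) (hab : GromovEquiv a b) :
    ∃ N, ∀ m ≥ N, c - 3 * δ ≤ gp w p (b m) := by
  obtain ⟨N₀, h₀⟩ := h
  obtain ⟨N₁, h₁⟩ := equiv_pairs hδ hgeo hhyp hab w (c + 3 * δ)
  set n₀ := max N₀ N₁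
  refine ⟨n₀, fun m hm => ?_⟩
  have hA := gp_min hδ hgeo hhyp w p (a n₀) (b m)
  have hf0 := h₀ n₀ (le_max_left _ _)
  have hf1 := h₁ n₀ m (le_max_right _ _) (le_trans (le_max_right _ _) hm)
  have : min c (c + 3*δ) ≤ min (gp w p (a n₀)) (gp w (a n₀) (b m)) := min_le_min hf0 hf1
  rw [min_eq_left (by linarith)] at this
  linarith

end Ev
section Chain
variable [MetricSpace X] {δ : ℝ}
variable (hδ : 0 ≤ δ) (hgeo : GeodesicSpace X) (hhyp : DeltaHyp X δ)
include hδ hgeo hhyp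

lemma rho_tri {w : X} {ε : ℝ} (hε : 0 < ε) (x y z : X) :
    Real.exp (-ε * gp w x z) ≤ Real.exp (ε * (3 * δ)) *
      max (Real.exp (-ε * gp w x y)) (Real.exp (-ε * gp w y z)) := by
  have h := gp_min hδ hgeo hhyp w x y z
  rcases le_total (gp w x y) (gp w y z) with hle | hle
  · rw [min_eq_left hle] at h
    calc Real.exp (-ε * gp w x z) ≤ Real.exp (ε * (3*δ) + -ε * gp w x y) := by
          apply Real.exp_le_exp.2; nlinarith
      _ = Real.exp (ε * (3*δ)) * Real.exp (-ε * gp w x y) := Real.exp_add _ _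
      _ ≤ _ := by
          have := le_max_left (Real.exp (-ε * gp w x y)) (Real.exp (-ε * gp w y z))
          nlinarith [Real.exp_pos (ε * (3*δ))]
  · rw [min_eq_right hle] at h
    calc Real.exp (-ε * gp w x z) ≤ Real.exp (ε * (3*δ) + -ε * gp w y z) := by
          apply Real.exp_le_exp.2; nlinarith
      _ = Real.exp (ε * (3*δ)) * Real.exp (-ε * gp w y z) := Real.exp_add _ _
      _ ≤ _ := by
          have := le_max_right (Real.exp (-ε * gp w x y)) (Real.exp (-ε * gp w y z))
          nlinarith [Real.exp_pos (ε * (3*δ))]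

lemma chain_pts {w : X} {ε : ℝ} (hε : 0 < ε) (hlam : Real.exp (ε * (3 * δ)) ^ 2 ≤ 2) :
    ∀ m : ℕ, ∀ x : ℕ → X, 1 ≤ m →
      Real.exp (-ε * gp w (x 0) (x m)) ≤
        2 * ∑ i ∈ Finset.range m, Real.exp (-ε * gp w (x i) (x (i + 1))) := by
  classical
  have hlam1 : 1 ≤ Real.exp (ε * (3*δ)) := Real.one_le_exp (by positivity)
  have hlam2 : Real.exp (ε * (3*δ)) ≤ 2 := by nlinarith
  intro m
  induction m using Nat.strong_induction_on with
  | _ m IH =>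
    intro x hm
    set T := ∑ i ∈ Finset.range m, Real.exp (-ε * gp w (x i) (x (i+1))) with hT
    have hTnn : 0 ≤ T := Finset.sum_nonneg (fun i _ => (Real.exp_pos _).le)
    have hterm : ∀ i, i < m → Real.exp (-ε * gp w (x i) (x (i+1))) ≤ T :=
      fun i hi => Finset.single_le_sum
        (f := fun i => Real.exp (-ε * gp w (x i) (x (i+1))))
        (fun i _ => (Real.exp_pos _).le) (Finset.mem_range.2 hi)
    rcases eq_or_lt_of_le hm with hm1 | hm2
    · -- m = 1
      have hm1' : m = 1 := hm1.symm
      subst hm1'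
      rw [hT, Finset.sum_range_one]
      linarith [Real.exp_pos (-ε * gp w (x 0) (x 1)), Real.exp_pos (-ε * gp w (x 0) (x 0))]
    · -- 2 ≤ m
      set pre : ℕ → ℝ := fun k => ∑ i ∈ Finset.range k, Real.exp (-ε * gp w (x i) (x (i+1)))
        with hpre
      have preT : pre m = T := rfl
      have sum_shift : ∀ j, j ≤ m →
          (∑ i ∈ Finset.range (m - j), Real.exp (-ε * gp w (x (j + i)) (x (j + i + 1))))
            = T - pre j := by
        intro j hj
        have h1 : pre j + ∑ i ∈ Finset.Ico j m, Real.exp (-ε * gp w (x i) (x (i+1))) = T := by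
          rw [hpre, hT]
          simp only [Finset.range_eq_Ico]
          exact Finset.sum_Ico_consecutive _ (Nat.zero_le j) hj
        have h2 : ∑ i ∈ Finset.Ico j m, Real.exp (-ε * gp w (x i) (x (i+1)))
            = ∑ i ∈ Finset.range (m - j), Real.exp (-ε * gp w (x (j + i)) (x (j + i + 1))) := by
          rw [Finset.sum_Ico_eq_sum_range]
        linarith [h1, h2]
      have tail : ∀ j, 1 ≤ j → j < m →
          Real.exp (-ε * gp w (x j) (x m)) ≤ 2 * (T - pre j) := by
        intro j hj1 hjm
        have hIH := IH (m - j) (by omega) (fun i => x (j + i)) (by omega)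
        simp only [← Nat.add_assoc] at hIH
        have e1 : j + 0 = j := Nat.add_zero j
        have e2 : j + (m - j) = m := by omega
        rw [e1, e2] at hIH
        calc Real.exp (-ε * gp w (x j) (x m)) ≤ _ := hIH
          _ = 2 * (T - pre j) := by rw [sum_shift j (le_of_lt hjm)]
      rcases le_or_gt (pre 1) (T / 2) with hcase | hcase
      · -- main case: find greatest j ≤ m-1 with pre j ≤ T/2
        set P : ℕ → Prop := fun k => pre k ≤ T / 2 with hP
        set j := Nat.findGreatest P (m - 1) with hj
        have hj1 : 1 ≤ j := Nat.le_findGreatest (by omega) hcase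
        have hjm1 : j ≤ m - 1 := Nat.findGreatest_le _
        have hjlt : j < m := by omega
        have hPj : P j := Nat.findGreatest_spec (m := 1) (by omega) hcase
        have hA : Real.exp (-ε * gp w (x 0) (x j)) ≤ T := by
          have := IH j hjlt x hj1
          have : Real.exp (-ε * gp w (x 0) (x j)) ≤ 2 * pre j := this
          calc Real.exp (-ε * gp w (x 0) (x j)) ≤ 2 * pre j := this
            _ ≤ 2 * (T/2) := by have := hPj; simp only [hP] at this; linarith
            _ = T := by ring
        have hB : Real.exp (-ε * gp w (x j) (x (j+1))) ≤ T := hterm j hjlt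
        rcases eq_or_lt_of_le (Nat.succ_le_of_lt hjlt) with hjm | hjm
        · -- j + 1 = m
          have hxm : x m = x (j+1) := by rw [← hjm]
          have step := rho_tri hδ hgeo hhyp hε (w := w) (x 0) (x j) (x m)
          rw [hxm] at step ⊢
          calc Real.exp (-ε * gp w (x 0) (x (j+1)))
              ≤ Real.exp (ε * (3*δ)) * max (Real.exp (-ε * gp w (x 0) (x j)))
                (Real.exp (-ε * gp w (x j) (x (j+1)))) := step
            _ ≤ 2 * T := by
                have hmax : max (Real.exp (-ε * gp w (x 0) (x j)))
                    (Real.exp (-ε * gp w (x j) (x (j+1)))) ≤ T := max_le hA hB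
                nlinarith [Real.exp_pos (ε * (3*δ)),
                  le_max_left (Real.exp (-ε * gp w (x 0) (x j)))
                    (Real.exp (-ε * gp w (x j) (x (j+1)))),
                  Real.exp_pos (-ε * gp w (x 0) (x j))]
        · -- j + 1 < m
          have hnot : ¬ P (j + 1) := by
            have hlt : Nat.findGreatest P (m - 1) < j + 1 := by rw [← hj]; omega
            exact Nat.findGreatest_is_greatest hlt (by omega)
          have hpre1 : T / 2 < pre (j+1) := by
            simp only [hP, not_le] at hnot; exact hnot
          have hC : Real.exp (-ε * gp w (x (j+1)) (x m)) ≤ T := by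
            have := tail (j+1) (by omega) (by omega)
            linarith
          have step1 := rho_tri hδ hgeo hhyp hε (w := w) (x 0) (x j) (x (j+1))
          have step2 := rho_tri hδ hgeo hhyp hε (w := w) (x 0) (x (j+1)) (x m)
          have hD : Real.exp (-ε * gp w (x 0) (x (j+1))) ≤ Real.exp (ε * (3*δ)) * T := by
            calc Real.exp (-ε * gp w (x 0) (x (j+1))) ≤ _ := step1
              _ ≤ Real.exp (ε * (3*δ)) * T := by
                  have hmax := max_le hA hB
                  nlinarith [Real.exp_pos (ε * (3*δ))]
          calc Real.exp (-ε * gp w (x 0) (x m)) ≤ _ := step2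
            _ ≤ 2 * T := by
                have hmax : max (Real.exp (-ε * gp w (x 0) (x (j+1))))
                    (Real.exp (-ε * gp w (x (j+1)) (x m))) ≤ Real.exp (ε * (3*δ)) * T := by
                  apply max_le hD
                  nlinarith
                nlinarith [Real.exp_pos (ε * (3*δ))]
      · -- first link already more than half the sum
        have hpre1T : pre 1 ≤ T := by
          have := hterm 0 (by omega)
          simp only [hpre, Finset.sum_range_one]
          exact this
        have hC : Real.exp (-ε * gp w (x 1) (x m)) ≤ T := by
          have := tail 1 (le_refl _) (by omega)
          linarith
        have step := rho_tri hδ hgeo hhyp hε (w := w) (x 0) (x 1) (x m)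
        have hpre1e : pre 1 = Real.exp (-ε * gp w (x 0) (x 1)) := by
          simp [hpre, Finset.sum_range_one]
        calc Real.exp (-ε * gp w (x 0) (x m)) ≤ _ := step
          _ ≤ 2 * T := by
              have hmax : max (Real.exp (-ε * gp w (x 0) (x 1)))
                  (Real.exp (-ε * gp w (x 1) (x m))) ≤ T :=
                max_le (by rw [← hpre1e]; exact hpre1T) hC
              nlinarith [Real.exp_pos (ε * (3*δ)),
                Real.exp_pos (-ε * gp w (x 0) (x m))]

end Chain



section Vis
variable [MetricSpace X] {w : X} {ε : ℝ}

lemma equiv_self {u : ℕ → X} (hu : IsGromovSeq u) : GromovEquiv u u := by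
  refine ⟨hu, hu, fun w => tendsto_atTop.2 fun b => ?_⟩
  obtain ⟨N, hN⟩ := grom_pairs hu w b
  exact eventually_atTop.2 ⟨N, fun i hi => hN i i hi hi⟩

lemma exp_gp_le_one (hε : 0 < ε) (a b : X) : Real.exp (-ε * gp w a b) ≤ 1 := by
  rw [show (1:ℝ) = Real.exp 0 by simp]
  apply Real.exp_le_exp.2
  nlinarith [gp_nonneg w a b]

lemma exp_bddAbove (hε : 0 < ε) (a b : ℕ → X) :
    IsBoundedUnder (· ≤ ·) atTop (fun i => Real.exp (-ε * gp w (a i) (b i))) :=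
  ⟨1, by rw [eventually_map]; exact Eventually.of_forall fun i => exp_gp_le_one hε _ _⟩

lemma exp_cobdd (a b : ℕ → X) :
    IsCoboundedUnder (· ≤ ·) atTop (fun i => Real.exp (-ε * gp w (a i) (b i))) := by
  apply IsBoundedUnder.isCoboundedUnder_le
  exact ⟨0, by rw [eventually_map]; exact Eventually.of_forall fun i => (Real.exp_pos _).le⟩

lemma rho_set_bdd (hε : 0 < ε) (u v : ℕ → X) :
    BddAbove {t | ∃ u' v' : ℕ → X, GromovEquiv u u' ∧ GromovEquiv v v' ∧
      t = Filter.limsup (fun i => Real.exp (-ε * gp w (u' i) (v' i))) atTop} := by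
  refine ⟨1, fun t ht => ?_⟩
  obtain ⟨u', v', _, _, rfl⟩ := ht
  exact limsup_le_of_le (exp_cobdd u' v') (Eventually.of_forall fun i => exp_gp_le_one hε _ _)

lemma rho_set_nonneg (hε : 0 < ε) (u v : ℕ → X) :
    ∀ t ∈ {t | ∃ u' v' : ℕ → X, GromovEquiv u u' ∧ GromovEquiv v v' ∧
      t = Filter.limsup (fun i => Real.exp (-ε * gp w (u' i) (v' i))) atTop}, 0 ≤ t := by
  rintro t ⟨u', v', _, _, rfl⟩
  exact le_limsup_of_frequently_le
    (Frequently.of_forall fun i => (Real.exp_pos _).le) (exp_bddAbove hε u' v')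

lemma limsup_mem {u v : ℕ → X} (hu : IsGromovSeq u) (hv : IsGromovSeq v) :
    Filter.limsup (fun i => Real.exp (-ε * gp w (u i) (v i))) atTop ∈
      {t | ∃ u' v' : ℕ → X, GromovEquiv u u' ∧ GromovEquiv v v' ∧
        t = Filter.limsup (fun i => Real.exp (-ε * gp w (u' i) (v' i))) atTop} :=
  ⟨u, v, equiv_self hu, equiv_self hv, rfl⟩

lemma visRho_nonneg (hε : 0 < ε) (u v : ℕ → X) : 0 ≤ visRho w ε u v :=
  Real.sSup_nonneg (rho_set_nonneg hε u v)

lemma limsup_le_visRho {u v : ℕ → X} (hε : 0 < ε) (hu : IsGromovSeq u) (hv : IsGromovSeq v) :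
    Filter.limsup (fun i => Real.exp (-ε * gp w (u i) (v i))) atTop ≤ visRho w ε u v :=
  le_csSup (rho_set_bdd hε u v) (limsup_mem hu hv)

lemma exp_neg_eps_log (hε : 0 < ε) {q : ℝ} (hq : 0 < q) :
    Real.exp (-ε * (-Real.log q / ε)) = q := by
  rw [show -ε * (-Real.log q / ε) = Real.log q by field_simp]
  exact Real.exp_log hq

lemma visDist_chain_mem (hε : 0 < ε) {u v : ℕ → X} (hu : IsGromovSeq u) (hv : IsGromovSeq v) :
    visRho w ε u v ∈ {s | ∃ (n : ℕ) (c : ℕ → ℕ → X), 1 ≤ n ∧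
      (∀ i, i ≤ n → IsGromovSeq (c i)) ∧ GromovEquiv (c 0) u ∧ GromovEquiv (c n) v ∧
      s = ∑ i ∈ Finset.range n, visRho w ε (c i) (c (i + 1))} := by
  refine ⟨1, fun i => if i = 0 then u else v, le_refl _, ?_, ?_, ?_, ?_⟩
  · intro i _
    by_cases hi : i = 0 <;> simp [hi, hu, hv]
  · simpa using equiv_self hu
  · simpa using equiv_self hv
  · simp [Finset.sum_range_one]

lemma visDist_set_bddBelow (hε : 0 < ε) (u v : ℕ → X) :
    BddBelow {s | ∃ (n : ℕ) (c : ℕ → ℕ → X), 1 ≤ n ∧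
      (∀ i, i ≤ n → IsGromovSeq (c i)) ∧ GromovEquiv (c 0) u ∧ GromovEquiv (c n) v ∧
      s = ∑ i ∈ Finset.range n, visRho w ε (c i) (c (i + 1))} := by
  refine ⟨0, fun s hs => ?_⟩
  obtain ⟨n, c, hn, hg, h0, hn', rfl⟩ := hs
  exact Finset.sum_nonneg fun i _ => visRho_nonneg hε _ _

lemma visDist_le_visRho (hε : 0 < ε) {u v : ℕ → X} (hu : IsGromovSeq u) (hv : IsGromovSeq v) :
    visDist w ε u v ≤ visRho w ε u v :=
  csInf_le (visDist_set_bddBelow hε u v) (visDist_chain_mem hε hu hv)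

end Vis

section VisHyp
variable [MetricSpace X] {δ : ℝ} {w : X} {ε : ℝ}
variable (hδ : 0 ≤ δ) (hgeo : GeodesicSpace X) (hhyp : DeltaHyp X δ) (hε : 0 < ε)
include hδ hgeo hhyp hε

lemma evB_of_visRho_ge {u v : ℕ → X} (hu : IsGromovSeq u) (hv : IsGromovSeq v) {a : ℝ}
    (ha : 0 < a) (h : a ≤ visRho w ε u v) :
    EvB w u v (-Real.log (a / 2) / ε + 12 * δ) := by
  set c₀ := -Real.log (a / 2) / ε with hc₀
  have h2 : a / 2 < visRho w ε u v := lt_of_lt_of_le (by linarith) h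
  obtain ⟨t, htS, hta⟩ := exists_lt_of_lt_csSup ⟨_, limsup_mem hu hv⟩ h2
  obtain ⟨u', v', huu', hvv', rfl⟩ := htS
  have hfreq := frequently_lt_of_lt_limsup (exp_cobdd u' v') hta
  have hfreq' : ∀ N, ∃ j k, N ≤ j ∧ N ≤ k ∧ gp w (u' j) (v' k) ≤ c₀ := by
    intro N
    obtain ⟨i, hi, hlt⟩ := frequently_atTop.mp hfreq N
    refine ⟨i, i, hi, hi, ?_⟩
    have hlog := Real.log_lt_log (by linarith : (0:ℝ) < a / 2) hlt
    rw [Real.log_exp] at hlog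
    rw [hc₀, le_div_iff₀ hε]
    nlinarith
  have hB : EvB w u' v' (c₀ + 6 * δ) := nc_up hδ hgeo hhyp huu'.2.1 hvv'.2.1 hfreq'
  have e1 : EvL w v v' (c₀ + 6 * δ + 3 * δ + 1) :=
    equiv_pairs hδ hgeo hhyp hvv' w _
  have hB2 : EvB w u' v (c₀ + 6 * δ + 3 * δ) := chain_up hδ hgeo hhyp hB e1 (by linarith)
  have e2 : EvL w u u' (c₀ + 6 * δ + 3 * δ + 3 * δ + 1) :=
    equiv_pairs hδ hgeo hhyp huu' w _
  have hB3 : EvB w v u (c₀ + 6 * δ + 3 * δ + 3 * δ) :=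
    chain_up hδ hgeo hhyp hB2.symm e2 (by linarith)
  exact hB3.symm.mono (by linarith)

lemma evL_of_visRho_le {u v : ℕ → X} (hu : IsGromovSeq u) (hv : IsGromovSeq v) {b : ℝ}
    (hb : 0 < b) (h : visRho w ε u v ≤ b) :
    EvL w u v (-Real.log (2 * b) / ε - 6 * δ) := by
  have h1 : Filter.limsup (fun i => Real.exp (-ε * gp w (u i) (v i))) atTop < 2 * b :=
    lt_of_le_of_lt (le_trans (limsup_le_visRho hε hu hv) h) (by linarith)
  have h2 := eventually_lt_of_limsup_lt h1 (exp_bddAbove hε u v)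
  apply nc_down hδ hgeo hhyp hu hv
  obtain ⟨N, hN⟩ := eventually_atTop.mp h2
  refine ⟨N, fun i hi => ?_⟩
  have hlt := hN i hi
  have hlog := Real.log_lt_log (Real.exp_pos _) hlt
  rw [Real.log_exp] at hlog
  rw [div_le_iff₀ hε]
  nlinarith

lemma evL_of_visDist_le {u v : ℕ → X} (hu : IsGromovSeq u) (hv : IsGromovSeq v)
    (hlam : Real.exp (ε * (3 * δ)) ^ 2 ≤ 2) {r : ℝ}
    (hr : 0 < r) (h : visDist w ε u v ≤ r) :
    EvL w u v (-Real.log (10 * r) / ε - 6 * δ) := by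
  have hne : Set.Nonempty {s | ∃ (n : ℕ) (c : ℕ → ℕ → X), 1 ≤ n ∧
      (∀ i, i ≤ n → IsGromovSeq (c i)) ∧ GromovEquiv (c 0) u ∧ GromovEquiv (c n) v ∧
      s = ∑ i ∈ Finset.range n, visRho w ε (c i) (c (i + 1))} :=
    ⟨_, visDist_chain_mem hε hu hv⟩
  obtain ⟨s, hsS, hs⟩ := exists_lt_of_csInf_lt hne
    (show visDist w ε u v < (3/2) * r by linarith)
  obtain ⟨n, c, hn1, hgrom, hc0, hcn, rfl⟩ := hsS
  have hnR : (0:ℝ) < (n:ℝ) := by exact_mod_cast hn1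
  have hstep : ∀ i ∈ Finset.range n, ∀ᶠ m in atTop,
      Real.exp (-ε * gp w (c i m) (c (i+1) m)) <
        visRho w ε (c i) (c (i+1)) + r / (2 * (n:ℝ)) := by
    intro i hi
    have him := Finset.mem_range.1 hi
    have hlim := limsup_le_visRho (w := w) hε (hgrom i (by omega)) (hgrom (i+1) (by omega))
    refine eventually_lt_of_limsup_lt ?_ (exp_bddAbove hε _ _)
    have : 0 < r / (2 * (n:ℝ)) := by positivity
    linarith
  have hall := (eventually_all_finset (Finset.range n)).2 hstep
  have hend0 : ∀ᶠ m in atTop, Real.exp (-ε * gp w (u m) (c 0 m)) ≤ r / 2 := by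
    have ht := (hc0.2.2 w).eventually_ge_atTop (-Real.log (r/2) / ε)
    refine ht.mono fun m hm => ?_
    rw [gp_comm]
    calc Real.exp (-ε * gp w (c 0 m) (u m)) ≤ Real.exp (-ε * (-Real.log (r/2) / ε)) := by
          apply Real.exp_le_exp.2; nlinarith
      _ = r / 2 := exp_neg_eps_log hε (by linarith)
  have hendn : ∀ᶠ m in atTop, Real.exp (-ε * gp w (c n m) (v m)) ≤ r / 2 := by
    have ht := (hcn.2.2 w).eventually_ge_atTop (-Real.log (r/2) / ε)
    refine ht.mono fun m hm => ?_
    calc Real.exp (-ε * gp w (c n m) (v m)) ≤ Real.exp (-ε * (-Real.log (r/2) / ε)) := by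
          apply Real.exp_le_exp.2; nlinarith
      _ = r / 2 := exp_neg_eps_log hε (by linarith)
  have hdiag : ∀ᶠ m in atTop, -Real.log (10 * r) / ε ≤ gp w (u m) (v m) := by
    filter_upwards [hall, hend0, hendn] with m hm h0 hn'
    classical
    set y : ℕ → X := fun i => if i = 0 then u m else if i ≤ n + 1 then c (i-1) m else v m
      with hy
    have hy0 : y 0 = u m := if_pos rfl
    have hyi : ∀ i, i ≤ n → y (i+1) = c i m := by
      intro i hi
      simp only [hy, Nat.succ_ne_zero, if_false]
      rw [if_pos (by omega)]
      congr 1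
    have hyn : y (n+2) = v m := by
      simp only [hy]
      rw [if_neg (by omega), if_neg (by omega)]
    have hchain := chain_pts (w := w) hδ hgeo hhyp hε hlam (n+2) y (by omega)
    set f : ℕ → ℝ := fun i => Real.exp (-ε * gp w (y i) (y (i+1))) with hf
    have hsum2 : ∑ i ∈ Finset.range (n+2), f i
        = (∑ i ∈ Finset.range n, f (i+1)) + f 0 + f (n+1) := by
      rw [Finset.sum_range_succ, Finset.sum_range_succ']
    have hf0 : f 0 ≤ r / 2 := by
      have h1 : y 1 = c 0 m := hyi 0 (by omega)
      simp only [hf, hy0, h1]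
      exact h0
    have hfn : f (n+1) ≤ r / 2 := by
      have h1 : y (n+1) = c n m := hyi n (le_refl _)
      have h2 : y (n+1+1) = v m := by rw [show n+1+1 = n+2 by omega, hyn]
      simp only [hf, h1, h2]
      exact hn'
    have hfsum : ∑ i ∈ Finset.range n, f (i+1)
        ≤ (∑ i ∈ Finset.range n, visRho w ε (c i) (c (i+1))) + r / 2 := by
      have hle : ∀ i ∈ Finset.range n, f (i+1)
          ≤ visRho w ε (c i) (c (i+1)) + r / (2 * (n:ℝ)) := by
        intro i hi
        have him := Finset.mem_range.1 hi
        have h1 : y (i+1) = c i m := hyi i (by omega)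
        have h2 : y (i+1+1) = c (i+1) m := hyi (i+1) (by omega)
        have h3 := hm i hi
        simp only [hf, h1, h2]
        exact le_of_lt h3
      calc ∑ i ∈ Finset.range n, f (i+1)
          ≤ ∑ i ∈ Finset.range n, (visRho w ε (c i) (c (i+1)) + r / (2*(n:ℝ))) :=
            Finset.sum_le_sum hle
        _ = (∑ i ∈ Finset.range n, visRho w ε (c i) (c (i+1)))
            + (n:ℝ) * (r/(2*(n:ℝ))) := by
            rw [Finset.sum_add_distrib, Finset.sum_const, Finset.card_range, nsmul_eq_mul]
        _ = (∑ i ∈ Finset.range n, visRho w ε (c i) (c (i+1))) + r/2 := by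
            congr 1
            field_simp
    have htot : Real.exp (-ε * gp w (u m) (v m)) ≤ 6 * r := by
      have hch := hchain
      rw [hy0, hyn] at hch
      have hsb : ∑ i ∈ Finset.range (n+2), f i ≤ 3 * r := by
        rw [hsum2]
        linarith [hfsum, hf0, hfn, hs]
      linarith
    have h10 : Real.exp (-ε * gp w (u m) (v m)) ≤ 10 * r := by linarith
    have hlog := Real.log_le_log (Real.exp_pos _) h10
    rw [Real.log_exp] at hlog
    rw [div_le_iff₀ hε]
    nlinarith
  exact nc_down hδ hgeo hhyp hu hv (eventually_atTop.mp hdiag)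

end VisHyp








section Dirs
variable [MetricSpace X] {δ : ℝ}
variable (hδ : 0 ≤ δ) (hgeo : GeodesicSpace X) (hhyp : DeltaHyp X δ)
include hδ hgeo hhyp

lemma gp_base_lip [MetricSpace X] (p p' x y : X) : gp p x y ≤ gp p' x y + dist p p' := by
  have h1 := dist_triangle x p' p
  have h2 := dist_triangle y p' p
  simp only [gp]
  rw [dist_comm p p']
  linarith

/-- directions through every point, from a pole -/
lemma pole_directions (hpole : HasPole X) :
    ∃ (w : X) (C₀ : ℝ), 0 ≤ C₀ ∧ ∀ p : X, ∃ v : ℕ → X, IsGromovSeq v ∧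
      ∃ N, ∀ n ≥ N, dist w p - C₀ ≤ gp w p (v n) := by
  obtain ⟨L, o, hL, ho, hP⟩ := hpole
  rcases o with o₀ | u₀
  · -- interior pole
    refine ⟨o₀, 2 * L + 6 * δ, by linarith, fun p => ?_⟩
    obtain ⟨γ, I, v, hv, ⟨hne, hord, hiso, hleft, hright⟩, s_p, hsp, hd⟩ := hP p
    obtain ⟨s₀, hs₀I, hγs₀, hmin⟩ := hleft
    obtain ⟨σ, hσI, hσtop, hequiv⟩ := hright
    have hkey : ∃ N, ∀ n ≥ N, dist o₀ p - 2 * L ≤ gp o₀ p (γ (σ n)) := by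
      obtain ⟨N, hN⟩ := eventually_atTop.mp (hσtop.eventually_ge_atTop s_p)
      refine ⟨N, fun n hn => ?_⟩
      have hσn := hN n hn
      have h1 : dist (γ s₀) (γ s_p) = s_p - s₀ := by
        rw [hiso s₀ hs₀I s_p hsp, abs_of_nonpos (by linarith [hmin s_p hsp])]; ring
      have h2 : dist (γ s₀) (γ (σ n)) = σ n - s₀ := by
        rw [hiso s₀ hs₀I (σ n) (hσI n), abs_of_nonpos (by linarith [hmin (σ n) (hσI n)])]
        ring
      have h3 : dist (γ s_p) (γ (σ n)) = σ n - s_p := by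
        rw [hiso s_p hsp (σ n) (hσI n), abs_of_nonpos (by linarith)]; ring
      have hg : gp o₀ (γ s_p) (γ (σ n)) = s_p - s₀ := by
        rw [← hγs₀]
        simp only [gp]
        rw [dist_comm (γ s_p) (γ s₀), dist_comm (γ (σ n)) (γ s₀), h1, h2, h3]
        ring
      have hlip := gp_lipschitz o₀ (γ s_p) p (γ (σ n))
      have hdist : dist o₀ p ≤ (s_p - s₀) + L := by
        calc dist o₀ p ≤ dist o₀ (γ s_p) + dist (γ s_p) p := dist_triangle _ _ _
          _ ≤ (s_p - s₀) + L := by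
              rw [← hγs₀, h1]
              have := dist_comm p (γ s_p) ▸ hd
              linarith [dist_comm (γ s_p) p, hd]
      linarith [dist_comm (γ s_p) p, hd]
    obtain ⟨N, hN⟩ := evl_transfer hδ hgeo hhyp hkey hequiv
    exact ⟨v, hv, N, fun n hn => by linarith [hN n hn]⟩
  · -- boundary pole
    set w := u₀ 0
    refine ⟨w, 2 * L + 6 * δ, by linarith, fun p => ?_⟩
    obtain ⟨γ, I, v, hv, ⟨hne, hord, hiso, hleft, hright⟩, s_p, hsp, hd⟩ := hP p
    obtain ⟨σm, hσmI, hσmbot, hequivm⟩ := hleft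
    obtain ⟨σp, hσpI, hσptop, hequivp⟩ := hright
    -- for s ≤ s_p ≤ t in I : gp p (γ s) (γ t) ≤ L
    have hseg : ∀ s ∈ I, ∀ t ∈ I, s ≤ s_p → s_p ≤ t → gp p (γ s) (γ t) ≤ L := by
      intro s hs t ht hs1 ht1
      have h1 : dist (γ s) (γ s_p) = s_p - s := by
        rw [hiso s hs s_p hsp, abs_of_nonpos (by linarith)]; ring
      have h2 : dist (γ t) (γ s_p) = t - s_p := by
        rw [hiso t ht s_p hsp, abs_of_nonneg (by linarith)]
      have h3 : dist (γ s) (γ t) = t - s := by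
        rw [hiso s hs t ht, abs_of_nonpos (by linarith)]; ring
      have hz : gp (γ s_p) (γ s) (γ t) = 0 := by
        simp only [gp]; rw [h1, h2, h3]; ring
      have := gp_base_lip hδ hgeo hhyp p (γ s_p) (γ s) (γ t)
      rw [hz] at this
      linarith [dist_comm p (γ s_p), hd]
    by_cases hQ : ∀ N, ∃ n ≥ N, s_p ≤ σp n ∧ L + 3 * δ < gp p w (γ (σp n))
    · -- use the left direction u₀
      have hkey : ∃ N, ∀ m ≥ N, dist w p - (L + 3 * δ) ≤ gp w p (γ (σm m)) := by
        obtain ⟨N, hN⟩ := eventually_atTop.mp (hσmbot.eventually_le_atBot s_p)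
        refine ⟨N, fun m hm => ?_⟩
        obtain ⟨n, _, hn1, hn2⟩ := hQ 0
        have hmin := gp_min hδ hgeo hhyp p (γ (σm m)) w (γ (σp n))
        have hup := hseg (σm m) (hσmI m) (σp n) (hσpI n) (hN m hm) hn1
        have hfirst : gp p (γ (σm m)) w ≤ L + 3 * δ := by
          by_contra hcon
          push_neg at hcon
          have : L + 3*δ < min (gp p (γ (σm m)) w) (gp p w (γ (σp n))) := lt_min hcon hn2
          linarith
        have hsw := gp_base_switch w p (γ (σm m))
        rw [gp_comm p (γ (σm m)) w] at hfirst
        linarith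
      obtain ⟨N, hN⟩ := evl_transfer hδ hgeo hhyp hkey hequivm
      exact ⟨u₀, hequivm.2.1, N, fun n hn => by linarith [hN n hn]⟩
    · -- use the right direction v
      push_neg at hQ
      obtain ⟨N₀, hN₀⟩ := hQ
      have hkey : ∃ N, ∀ n ≥ N, dist w p - (L + 3 * δ) ≤ gp w p (γ (σp n)) := by
        obtain ⟨N₁, hN₁⟩ := eventually_atTop.mp (hσptop.eventually_ge_atTop s_p)
        refine ⟨max N₀ N₁, fun n hn => ?_⟩
        have h1 := hN₀ n (le_trans (le_max_left _ _) hn)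
        have h2 := hN₁ n (le_trans (le_max_right _ _) hn)
        have h3 := h1 h2
        have hsw := gp_base_switch w p (γ (σp n))
        linarith
      obtain ⟨N, hN⟩ := evl_transfer hδ hgeo hhyp hkey hequivp
      exact ⟨v, hv, N, fun n hn => by linarith [hN n hn]⟩

/-- uniformly perfect boundary: directions at every product scale -/
lemma perf_directions {w : X} {ε : ℝ} (hε : 0 < ε) (hε1 : ε < 1) (hε5 : ε * (5 * δ) < 1)
    (hlam : Real.exp (ε * (3 * δ)) ^ 2 ≤ 2) (hperf : BoundaryUniformlyPerfect X δ) :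
    ∃ M T₀ : ℝ, 0 ≤ M ∧ 0 ≤ T₀ ∧ ∀ u : ℕ → X, IsGromovSeq u → ∀ T, T₀ ≤ T →
      ∃ v : ℕ → X, IsGromovSeq v ∧ EvL w u v (T - M) ∧ EvB w u v (T + M) := by
  obtain ⟨S, hS1, r₀, hr₀, hmain⟩ := hperf w ε hε hε1 hε5
  have hlogS : 0 ≤ Real.log S := Real.log_nonneg hS1
  have hlog2 : 0 < Real.log 2 := Real.log_pos (by norm_num)
  have hlog10 : 0 < Real.log 10 := Real.log_pos (by norm_num)
  have hlog210 : Real.log 2 ≤ Real.log 10 := Real.log_le_log (by norm_num) (by norm_num)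
  refine ⟨(Real.log S + Real.log 10) / ε + 18 * δ + 1, max 0 (-Real.log r₀ / ε + 1),
    by nlinarith [div_nonneg (by linarith : (0:ℝ) ≤ Real.log S + Real.log 10) hε.le],
    le_max_left _ _, fun u hu T hT => ?_⟩
  set r := Real.exp (-ε * T) with hr
  have hrpos : 0 < r := Real.exp_pos _
  have hrr₀ : r ≤ r₀ := by
    have h1 : -Real.log r₀ / ε + 1 ≤ T := le_trans (le_max_right _ _) hT
    have h2 : -Real.log r₀ ≤ (T - 1) * ε :=
      (div_le_iff₀ hε).1 (by linarith : -Real.log r₀ / ε ≤ T - 1)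
    rw [hr, ← Real.exp_log hr₀]
    apply Real.exp_le_exp.2
    nlinarith
  obtain ⟨v, hv, hlow, hup⟩ := hmain u hu r hrpos hrr₀
  have hlogr : Real.log r = -ε * T := by rw [hr, Real.log_exp]
  have hS0 : (0:ℝ) < S := by linarith
  have hrS : 0 < r / S := by positivity
  refine ⟨v, hv, ?_, ?_⟩
  · -- lower bound from visDist ≤ r
    have h := evL_of_visDist_le hδ hgeo hhyp hε hu hv hlam hrpos hup
    refine h.mono ?_
    have hcalc : Real.log (10 * r) = Real.log 10 + -ε * T := by
      rw [Real.log_mul (by norm_num) (ne_of_gt hrpos), hlogr]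
    rw [hcalc]
    have heq : -(Real.log 10 + -ε * T) / ε = T - Real.log 10 / ε := by
      field_simp
      ring
    rw [heq]
    have hsplit : (Real.log S + Real.log 10) / ε = Real.log S / ε + Real.log 10 / ε := by
      ring
    have h2 : 0 ≤ Real.log S / ε := by positivity
    linarith
  · -- upper bound from visDist > r/S
    have hvisRho : r / S ≤ visRho w ε u v :=
      le_trans (le_of_lt hlow) (visDist_le_visRho hε hu hv)
    have h := evB_of_visRho_ge hδ hgeo hhyp hε hu hv hrS hvisRho
    refine h.mono ?_
    have e1 : Real.log (r / S / 2) = Real.log (r / S) - Real.log 2 :=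
      Real.log_div (ne_of_gt hrS) (by norm_num)
    have e2 : Real.log (r / S) = Real.log r - Real.log S :=
      Real.log_div (ne_of_gt hrpos) (ne_of_gt hS0)
    rw [e1, e2, hlogr]
    have heq : -(-ε * T - Real.log S - Real.log 2) / ε
        = T + Real.log S / ε + Real.log 2 / ε := by
      field_simp
      ring
    rw [heq]
    have hsplit : (Real.log S + Real.log 10) / ε = Real.log S / ε + Real.log 10 / ε := by
      ring
    have h2 : Real.log 2 / ε ≤ Real.log 10 / ε := (div_le_div_iff_of_pos_right hε).2 hlog210
    linarith

end Dirs


lemma clamp_mem {a b s : ℝ} (hab : a ≤ b) : max a (min b s) ∈ Icc a b :=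
  ⟨le_max_left _ _, max_le hab (min_le_left _ _)⟩

lemma clamp_abs {a b s : ℝ} (ha : a ≤ 0) (hb : 0 ≤ b) : |max a (min b s)| ≤ |s| := by
  rw [abs_le]
  constructor
  · exact le_max_of_le_right (le_min (by linarith [abs_nonneg s]) (neg_abs_le s))
  · exact max_le (by linarith [abs_nonneg s]) (le_trans (min_le_right b s) (le_abs_self s))

lemma clamp_lip (a b s t : ℝ) : |max a (min b s) - max a (min b t)| ≤ |s - t| := by
  have key : ∀ u v : ℝ, max a (min b u) - max a (min b v) ≤ |u - v| := by
    intro u v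
    have hu : u ≤ v + |u - v| := by cases abs_cases (u - v) <;> linarith
    have hm : min b u ≤ min b v + |u - v| := by
      rcases le_total b v with h | h
      · rw [min_eq_left h]
        exact le_trans (min_le_left _ _) (le_add_of_nonneg_right (abs_nonneg _))
      · rw [min_eq_right h]
        exact le_trans (min_le_right _ _) hu
    have : max a (min b u) ≤ max a (min b v) + |u - v| := by
      apply max_le
      · exact le_trans (le_max_left _ _) (le_add_of_nonneg_right (abs_nonneg _))
      · exact le_trans hm (add_le_add (le_max_right _ _) (le_refl _))
    linarith
  have h2 := key s t
  have h3 := key t s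
  rw [abs_sub_comm t s] at h3
  cases abs_cases (max a (min b s) - max a (min b t)) <;> linarith

section LineLimit
variable [MetricSpace X] [ProperSpace X] {δ : ℝ}
variable (hδ : 0 ≤ δ) (hgeo : GeodesicSpace X) (hhyp : DeltaHyp X δ)
include hδ hgeo hhyp

lemma line_limit {p : X} {x y : ℕ → X} {A : ℝ}
    (hgp : ∀ n, gp p (x n) (y n) ≤ A)
    (hx : Tendsto (fun n => dist p (x n)) atTop atTop)
    (hy : Tendsto (fun n => dist p (y n)) atTop atTop) :
    ∃ (γ : ℝ → X) (σ : ℕ → ℝ → X) (a b : ℕ → ℝ),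
      IsBiInfGeod γ ∧ dist p (γ 0) ≤ A + 2 * δ ∧
      (∀ n, a n ≤ 0 ∧ 0 ≤ b n) ∧
      (∀ n, ∀ s ∈ Icc (a n) (b n), ∀ t ∈ Icc (a n) (b n),
          dist (σ n s) (σ n t) = |s - t|) ∧
      (∀ n, ∃ m, σ n (a n) = x m ∧ σ n (b n) = y m) ∧
      Tendsto a atTop atBot ∧ Tendsto b atTop atTop ∧
      (∀ t : ℝ, Tendsto (fun n => σ n (max (a n) (min (b n) t))) atTop (nhds (γ t))) := by
  classical
  -- choose geodesics and near-points
  have hch : ∀ n, ∃ g : ℝ → X, IsGeodSegment g 0 (dist (x n) (y n)) ∧ g 0 = x n ∧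
      g (dist (x n) (y n)) = y n := fun n => hgeo (x n) (y n)
  choose g hgiso hg0 hg1 using hch
  have hnear : ∀ n, ∃ t₀ ∈ Icc (0:ℝ) (dist (x n) (y n)),
      dist p (g n t₀) ≤ gp p (x n) (y n) + 2 * δ :=
    fun n => exists_near_gp hδ hgeo hhyp (hgiso n) (hg0 n) (hg1 n) p
  choose t₀ ht₀mem ht₀near using hnear
  set σ0 : ℕ → ℝ → X := fun n t => g n (t + t₀ n) with hσ0
  set a0 : ℕ → ℝ := fun n => -(t₀ n) with ha0
  set b0 : ℕ → ℝ := fun n => dist (x n) (y n) - t₀ n with hb0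
  have hab0 : ∀ n, a0 n ≤ 0 ∧ 0 ≤ b0 n := fun n =>
    ⟨by simp [ha0]; exact (ht₀mem n).1, by simp [hb0]; exact (ht₀mem n).2⟩
  have hσiso : ∀ n, ∀ s ∈ Icc (a0 n) (b0 n), ∀ t ∈ Icc (a0 n) (b0 n),
      dist (σ0 n s) (σ0 n t) = |s - t| := by
    intro n s hs t ht
    have h1 : s + t₀ n ∈ Icc (0:ℝ) (dist (x n) (y n)) := by
      constructor
      · have := hs.1; simp [ha0] at this; linarith
      · have := hs.2; simp [hb0] at this; linarith
    have h2 : t + t₀ n ∈ Icc (0:ℝ) (dist (x n) (y n)) := by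
      constructor
      · have := ht.1; simp [ha0] at this; linarith
      · have := ht.2; simp [hb0] at this; linarith
    rw [show σ0 n s = g n (s + t₀ n) from rfl, show σ0 n t = g n (t + t₀ n) from rfl,
      hgiso n _ h1 _ h2]
    congr 1; ring
  have hends : ∀ n, σ0 n (a0 n) = x n ∧ σ0 n (b0 n) = y n := by
    intro n
    constructor
    · show g n (-(t₀ n) + t₀ n) = x n
      rw [show -(t₀ n) + t₀ n = 0 by ring, hg0 n]
    · show g n (dist (x n) (y n) - t₀ n + t₀ n) = y n
      rw [show dist (x n) (y n) - t₀ n + t₀ n = dist (x n) (y n) by ring, hg1 n]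
  have hnear0 : ∀ n, dist p (σ0 n 0) ≤ A + 2 * δ := by
    intro n
    have : σ0 n 0 = g n (t₀ n) := by show g n (0 + t₀ n) = _; rw [zero_add]
    rw [this]
    exact le_trans (ht₀near n) (by linarith [hgp n])
  -- a0 → -∞ and b0 → ∞
  have hxdist : ∀ n, dist p (x n) ≤ t₀ n + (A + 2 * δ) := by
    intro n
    have h1 : dist (x n) (g n (t₀ n)) = t₀ n :=
      (geod_dists (hgiso n) (hg0 n) (hg1 n) (ht₀mem n)).1
    calc dist p (x n) ≤ dist p (g n (t₀ n)) + dist (g n (t₀ n)) (x n) := dist_triangle _ _ _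
      _ ≤ (A + 2*δ) + t₀ n := by
          have := le_trans (ht₀near n) (by linarith [hgp n] :
            gp p (x n) (y n) + 2*δ ≤ A + 2*δ)
          rw [dist_comm (g n (t₀ n)) (x n), h1]
          linarith
      _ = t₀ n + (A + 2*δ) := by ring
  have hydist : ∀ n, dist p (y n) ≤ b0 n + (A + 2 * δ) := by
    intro n
    have h1 : dist (y n) (g n (t₀ n)) = dist (x n) (y n) - t₀ n :=
      (geod_dists (hgiso n) (hg0 n) (hg1 n) (ht₀mem n)).2
    calc dist p (y n) ≤ dist p (g n (t₀ n)) + dist (g n (t₀ n)) (y n) := dist_triangle _ _ _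
      _ ≤ (A + 2*δ) + (dist (x n) (y n) - t₀ n) := by
          have := le_trans (ht₀near n) (by linarith [hgp n] :
            gp p (x n) (y n) + 2*δ ≤ A + 2*δ)
          rw [dist_comm (g n (t₀ n)) (y n), h1]
          linarith
      _ = b0 n + (A + 2*δ) := by simp [hb0]; ring
  have ha0bot : Tendsto a0 atTop atBot := by
    apply Filter.tendsto_atBot.2
    intro c
    refine (hx.eventually_ge_atTop (A + 2*δ - c)).mono fun n hn => ?_
    have := hxdist n
    simp only [ha0]
    linarith
  have hb0top : Tendsto b0 atTop atTop := by
    apply Filter.tendsto_atTop.2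
    intro c
    refine (hy.eventually_ge_atTop (A + 2*δ + c)).mono fun n hn => ?_
    have := hydist n
    linarith
  -- membership in compact product
  have hmem : ∀ n (q : ℚ), σ0 n (max (a0 n) (min (b0 n) (q:ℝ)))
      ∈ closedBall p (|(q:ℝ)| + (A + 2*δ)) := by
    intro n q
    have hab := hab0 n
    have hcm := clamp_mem (le_trans hab.1 hab.2) (s := (q:ℝ))
    have h0m : (0:ℝ) ∈ Icc (a0 n) (b0 n) := ⟨hab.1, hab.2⟩
    have hdd := hσiso n _ hcm 0 h0m
    rw [mem_closedBall]
    calc dist (σ0 n (max (a0 n) (min (b0 n) (q:ℝ)))) p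
        ≤ dist (σ0 n (max (a0 n) (min (b0 n) (q:ℝ)))) (σ0 n 0) + dist (σ0 n 0) p :=
          dist_triangle _ _ _
      _ ≤ |(q:ℝ)| + (A + 2*δ) := by
          rw [hdd]
          have h1 : |max (a0 n) (min (b0 n) (q:ℝ)) - 0| ≤ |(q:ℝ)| := by
            rw [sub_zero]; exact clamp_abs hab.1 hab.2
          have h2 := hnear0 n
          rw [dist_comm (σ0 n 0) p]
          linarith
  set F : ℕ → (ℚ → X) := fun n q => σ0 n (max (a0 n) (min (b0 n) (q:ℝ))) with hF
  have hcomp : IsCompact (Set.pi univ fun q : ℚ => closedBall p (|(q:ℝ)| + (A + 2*δ))) :=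
    isCompact_univ_pi fun q => isCompact_closedBall _ _
  have hFmem : ∀ n, F n ∈ Set.pi univ fun q : ℚ => closedBall p (|(q:ℝ)| + (A + 2*δ)) :=
    fun n => fun q _ => hmem n q
  obtain ⟨G, hGmem, φ, hφ, hconv⟩ := hcomp.tendsto_subseq hFmem
  have hconvq : ∀ q : ℚ, Tendsto (fun n => F (φ n) q) atTop (𝓝 (G q)) := by
    intro q
    have := tendsto_pi_nhds.1 hconv q
    exact this
  have haφ : Tendsto (fun n => a0 (φ n)) atTop atBot := ha0bot.comp hφ.tendsto_atTop
  have hbφ : Tendsto (fun n => b0 (φ n)) atTop atTop := hb0top.comp hφ.tendsto_atTop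
  -- G is isometric on ℚ
  have hGiso : ∀ q q' : ℚ, dist (G q) (G q') = |(q:ℝ) - (q':ℝ)| := by
    intro q q'
    have h1 : Tendsto (fun n => dist (F (φ n) q) (F (φ n) q')) atTop
        (𝓝 (dist (G q) (G q'))) := (hconvq q).dist (hconvq q')
    have h2 : ∀ᶠ n in atTop, dist (F (φ n) q) (F (φ n) q') = |(q:ℝ) - (q':ℝ)| := by
      filter_upwards [haφ.eventually_le_atBot (min (q:ℝ) (q':ℝ)),
        hbφ.eventually_ge_atTop (max (q:ℝ) (q':ℝ))] with n hna hnb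
      have hclq : max (a0 (φ n)) (min (b0 (φ n)) (q:ℝ)) = (q:ℝ) := by
        rw [min_eq_right (le_trans (le_max_left _ _) hnb),
          max_eq_right (le_trans hna (min_le_left _ _))]
      have hclq' : max (a0 (φ n)) (min (b0 (φ n)) (q':ℝ)) = (q':ℝ) := by
        rw [min_eq_right (le_trans (le_max_right _ _) hnb),
          max_eq_right (le_trans hna (min_le_right _ _))]
      have hab := hab0 (φ n)
      have hmem1 : (q:ℝ) ∈ Icc (a0 (φ n)) (b0 (φ n)) := by
        rw [← hclq]; exact clamp_mem (le_trans hab.1 hab.2)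
      have hmem2 : (q':ℝ) ∈ Icc (a0 (φ n)) (b0 (φ n)) := by
        rw [← hclq']; exact clamp_mem (le_trans hab.1 hab.2)
      show dist (σ0 (φ n) _) (σ0 (φ n) _) = _
      rw [hclq, hclq']
      exact hσiso (φ n) _ hmem1 _ hmem2
    exact tendsto_nhds_unique h1 (Tendsto.congr' (EventuallyEq.symm h2) tendsto_const_nhds)
  -- rational approximations
  have hrat : ∀ t : ℝ, ∀ k : ℕ, ∃ q : ℚ, |t - (q:ℝ)| < 1/(k+1) :=
    fun t k => exists_rat_near t (by positivity)
  choose qs hqs using hrat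
  have hqs_tendsto : ∀ t : ℝ, Tendsto (fun k => ((qs t k : ℚ):ℝ)) atTop (𝓝 t) := by
    intro t
    rw [Metric.tendsto_atTop]
    intro e he
    obtain ⟨k₀, hk₀⟩ := exists_nat_one_div_lt he
    refine ⟨k₀, fun k hk => ?_⟩
    have h1 := hqs t k
    have h2 : 1/((k:ℝ)+1) ≤ 1/((k₀:ℝ)+1) := by
      apply one_div_le_one_div_of_le (by positivity)
      exact_mod_cast by omega
    rw [Real.dist_eq, abs_sub_comm]
    calc |t - ((qs t k : ℚ):ℝ)| < 1/((k:ℝ)+1) := h1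
      _ ≤ 1/((k₀:ℝ)+1) := h2
      _ < e := hk₀
  have hcauchy : ∀ t : ℝ, CauchySeq (fun k => G (qs t k)) := by
    intro t
    rw [Metric.cauchySeq_iff]
    intro e he
    have := (hqs_tendsto t).cauchySeq
    rw [Metric.cauchySeq_iff] at this
    obtain ⟨N, hN⟩ := this e he
    refine ⟨N, fun m hm k hk => ?_⟩
    rw [hGiso]
    have := hN m hm k hk
    rwa [Real.dist_eq] at this
  have hlim : ∀ t : ℝ, ∃ z, Tendsto (fun k => G (qs t k)) atTop (𝓝 z) :=
    fun t => cauchySeq_tendsto_of_complete (hcauchy t)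
  choose γ hγ using hlim
  have hdistγG : ∀ (t : ℝ) (q : ℚ), dist (γ t) (G q) = |t - (q:ℝ)| := by
    intro t q
    have h1 : Tendsto (fun k => dist (G (qs t k)) (G q)) atTop (𝓝 (dist (γ t) (G q))) :=
      (hγ t).dist tendsto_const_nhds
    have h2 : Tendsto (fun k => |((qs t k : ℚ):ℝ) - (q:ℝ)|) atTop (𝓝 |t - (q:ℝ)|) :=
      (Tendsto.sub (hqs_tendsto t) tendsto_const_nhds).abs
    have h3 : (fun k => dist (G (qs t k)) (G q)) = fun k => |((qs t k : ℚ):ℝ) - (q:ℝ)| :=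
      funext fun k => hGiso _ _
    rw [h3] at h1
    exact tendsto_nhds_unique h1 h2
  have hγiso : IsBiInfGeod γ := by
    intro s t
    have h1 : Tendsto (fun k => dist (G (qs s k)) (G (qs t k))) atTop
        (𝓝 (dist (γ s) (γ t))) := (hγ s).dist (hγ t)
    have h2 : Tendsto (fun k => |((qs s k : ℚ):ℝ) - ((qs t k : ℚ):ℝ)|) atTop
        (𝓝 |s - t|) := ((hqs_tendsto s).sub (hqs_tendsto t)).abs
    have h3 : (fun k => dist (G (qs s k)) (G (qs t k)))
        = fun k => |((qs s k : ℚ):ℝ) - ((qs t k : ℚ):ℝ)| := funext fun k => hGiso _ _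
    rw [h3] at h1
    exact tendsto_nhds_unique h1 h2
  -- dist p (γ 0)
  have hpG0 : dist p (G 0) ≤ A + 2*δ := by
    have h1 : Tendsto (fun n => dist p (F (φ n) 0)) atTop (𝓝 (dist p (G 0))) :=
      tendsto_const_nhds.dist (hconvq 0)
    apply le_of_tendsto h1
    apply Eventually.of_forall
    intro n
    have h3 := hmem (φ n) 0
    rw [mem_closedBall] at h3
    rw [dist_comm]
    calc dist (F (φ n) 0) p
        = dist (σ0 (φ n) (max (a0 (φ n)) (min (b0 (φ n)) (((0:ℚ):ℝ))))) p := rfl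
      _ ≤ |((0:ℚ):ℝ)| + (A + 2*δ) := h3
      _ = A + 2*δ := by norm_num
  have hpγ0 : dist p (γ 0) ≤ A + 2*δ := by
    have h1 : dist (γ 0) (G 0) = 0 := by
      rw [hdistγG 0 0]; simp
    calc dist p (γ 0) ≤ dist p (G 0) + dist (G 0) (γ 0) := dist_triangle _ _ _
      _ = dist p (G 0) := by rw [dist_comm (G 0) (γ 0), h1, add_zero]
      _ ≤ A + 2*δ := hpG0
  -- final convergence
  have hfinal : ∀ t : ℝ, Tendsto (fun n => σ0 (φ n)
      (max (a0 (φ n)) (min (b0 (φ n)) t))) atTop (𝓝 (γ t)) := by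
    intro t
    rw [Metric.tendsto_atTop]
    intro e he
    obtain ⟨k₀, hk₀⟩ := exists_nat_one_div_lt (show (0:ℝ) < e/3 by linarith)
    set q := qs t k₀ with hqdef
    have hqt : |t - (q:ℝ)| < e/3 := lt_trans (hqs t k₀) hk₀
    have h2 := (hconvq q).eventually (Metric.ball_mem_nhds (G q) (show (0:ℝ) < e/3 by linarith))
    obtain ⟨N, hN⟩ := eventually_atTop.mp h2
    refine ⟨N, fun n hn => ?_⟩
    have hab := hab0 (φ n)
    have hc1 := clamp_mem (le_trans hab.1 hab.2) (s := t)
    have hc2 := clamp_mem (le_trans hab.1 hab.2) (s := ((q:ℝ)))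
    have hd1 : dist (σ0 (φ n) (max (a0 (φ n)) (min (b0 (φ n)) t)))
        (σ0 (φ n) (max (a0 (φ n)) (min (b0 (φ n)) (q:ℝ)))) ≤ |t - (q:ℝ)| := by
      rw [hσiso (φ n) _ hc1 _ hc2]
      exact clamp_lip _ _ _ _
    have hd2 : dist (F (φ n) q) (G q) < e/3 := mem_ball.1 (hN n hn)
    have hd3 : dist (G q) (γ t) = |t - (q:ℝ)| := by
      rw [dist_comm, hdistγG]
    calc dist (σ0 (φ n) (max (a0 (φ n)) (min (b0 (φ n)) t))) (γ t)
        ≤ dist (σ0 (φ n) (max (a0 (φ n)) (min (b0 (φ n)) t))) (F (φ n) q)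
          + dist (F (φ n) q) (G q) + dist (G q) (γ t) := dist_triangle4 _ _ _ _
      _ ≤ |t - (q:ℝ)| + dist (F (φ n) q) (G q) + |t - (q:ℝ)| := by
          rw [hd3]
          exact add_le_add (add_le_add hd1 (le_refl _)) (le_refl _)
      _ < e/3 + e/3 + e/3 := by
          have := hd2
          linarith
      _ = e := by ring
  refine ⟨γ, fun n => σ0 (φ n), fun n => a0 (φ n), fun n => b0 (φ n),
    hγiso, hpγ0, fun n => hab0 (φ n), fun n => hσiso (φ n),
    fun n => ⟨φ n, (hends (φ n)).1, (hends (φ n)).2⟩,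
    haφ, hbφ, hfinal⟩

end LineLimit

section Assembly
variable [MetricSpace X] {δ : ℝ}

lemma gp_base_formula (w p x y : X) :
    gp p x y = gp w x y - gp w p x - gp w p y + dist w p := by
  simp only [gp, dist_comm x p, dist_comm y p, dist_comm p w]
  ring

lemma gp_tendsto {p z x : X} {u : ℕ → X} (hu : Tendsto u atTop (nhds x)) :
    Tendsto (fun n => gp p z (u n)) atTop (nhds (gp p z x)) := by
  have h1 : Tendsto (fun n => dist (u n) p) atTop (nhds (dist x p)) :=
    hu.dist tendsto_const_nhds
  have h2 : Tendsto (fun n => dist z (u n)) atTop (nhds (dist z x)) :=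
    tendsto_const_nhds.dist hu
  simp only [gp]
  exact ((tendsto_const_nhds.add h1).sub h2).div_const 2

variable (hδ : 0 ≤ δ) (hgeo : GeodesicSpace X) (hhyp : DeltaHyp X δ)
include hδ hgeo hhyp

/-- points on a geodesic segment whose endpoints have small products with q
also have small product with q -/
lemma seg_gp_bound {p q : X} {σ : ℝ → X} {a b : ℝ} (hab : a ≤ b)
    (hσ : ∀ s ∈ Icc a b, ∀ t ∈ Icc a b, dist (σ s) (σ t) = |s - t|)
    {B : ℝ} (hxB : gp p q (σ a) ≤ B) (hyB : gp p q (σ b) ≤ B) :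
    ∀ t ∈ Icc a b, gp p q (σ t) ≤ 2 * B + 6 * δ := by
  intro t ht
  have hamem : a ∈ Icc a b := ⟨le_refl _, hab⟩
  have hbmem : b ∈ Icc a b := ⟨hab, le_refl _⟩
  have h1 : dist (σ a) (σ t) = t - a := by
    rw [hσ a hamem t ht, abs_of_nonpos (by linarith [ht.1])]; ring
  have h2 : dist (σ t) (σ b) = b - t := by
    rw [hσ t ht b hbmem, abs_of_nonpos (by linarith [ht.2])]; ring
  have h3 : dist (σ a) (σ b) = b - a := by
    rw [hσ a hamem b hbmem, abs_of_nonpos (by linarith)]; ring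
  have hadd : gp p (σ a) (σ t) + gp p (σ t) (σ b)
      = dist p (σ t) + gp p (σ a) (σ b) := by
    simp only [gp]
    rw [h1, h2, h3, dist_comm (σ t) p]
    ring
  have hgpab : 0 ≤ gp p (σ a) (σ b) := gp_nonneg _ _ _
  have hgq_le : gp p q (σ t) ≤ dist p (σ t) := by
    rw [dist_comm]; exact gp_le_right _ _ _
  have hgq0 : 0 ≤ gp p q (σ t) := gp_nonneg _ _ _
  rcases le_total (gp p (σ a) (σ t)) (gp p (σ t) (σ b)) with h | h
  · have h5 : dist p (σ t) / 2 ≤ gp p (σ t) (σ b) := by linarith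
    have hmin := gp_min hδ hgeo hhyp p q (σ t) (σ b)
    have h6 : gp p q (σ t) / 2 ≤ min (gp p q (σ t)) (gp p (σ t) (σ b)) :=
      le_min (by linarith) (by linarith)
    linarith
  · have h5 : dist p (σ t) / 2 ≤ gp p (σ a) (σ t) := by linarith
    have hmin := gp_min hδ hgeo hhyp p q (σ t) (σ a)
    have h6 : gp p q (σ t) / 2 ≤ min (gp p q (σ t)) (gp p (σ t) (σ a)) :=
      le_min (by linarith) (by rw [gp_comm p (σ t) (σ a)]; linarith)
    linarith

lemma evl_point_chain {w p : X} {va vb : ℕ → X} {c₁ c₂ : ℝ}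
    (h1 : ∃ N, ∀ n ≥ N, c₁ ≤ gp w p (va n)) (h2 : EvL w va vb c₂) :
    ∃ N, ∀ n ≥ N, min c₁ c₂ - 3 * δ ≤ gp w p (vb n) := by
  obtain ⟨N₁, hN₁⟩ := h1
  obtain ⟨N₂, hN₂⟩ := h2
  set j₀ := max N₁ N₂
  refine ⟨j₀, fun n hn => ?_⟩
  have hA := gp_min hδ hgeo hhyp w p (va j₀) (vb n)
  have hf1 := hN₁ j₀ (le_max_left _ _)
  have hf2 := hN₂ j₀ n (le_max_right _ _) (le_trans (le_max_right _ _) hn)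
  have : min c₁ c₂ ≤ min (gp w p (va j₀)) (gp w (va j₀) (vb n)) :=
    le_min (le_trans (min_le_left _ _) hf1) (le_trans (min_le_right _ _) hf2)
  linarith

/-- change of base point for eventual upper bounds -/
lemma base_change {w p : X} {x y : ℕ → X} {G Cx Cy : ℝ} (hB : EvB w x y G)
    (hpx : ∃ N, ∀ n ≥ N, dist w p - Cx ≤ gp w p (x n))
    (hpy : ∃ N, ∀ n ≥ N, dist w p - Cy ≤ gp w p (y n)) :
    EvB p x y (G - dist w p + Cx + Cy) := by
  obtain ⟨N₀, h₀⟩ := hB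
  obtain ⟨N₁, h₁⟩ := hpx
  obtain ⟨N₂, h₂⟩ := hpy
  refine ⟨max N₀ (max N₁ N₂), fun j k hj hk => ?_⟩
  have hf0 := h₀ j k (le_trans (le_max_left _ _) hj) (le_trans (le_max_left _ _) hk)
  have hf1 := h₁ j (le_trans (le_trans (le_max_left _ _) (le_max_right _ _)) hj)
  have hf2 := h₂ k (le_trans (le_trans (le_max_right _ _) (le_max_right _ _)) hk)
  have := gp_base_formula w p (x j) (y k)
  linarith

end Assembly

section Master
variable [MetricSpace X] [ProperSpace X] {δ : ℝ}

lemma master (hδ : 0 ≤ δ) (hgeo : GeodesicSpace X) (hhyp : DeltaHyp X δ)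
    (hpole : HasPole X) (hperf : BoundaryUniformlyPerfect X δ) :
    ∃ R B B' : ℝ, 0 ≤ R ∧ 0 ≤ B ∧ 0 ≤ B' ∧ ∀ (p : X) (z₁ z₂ : ℕ → X),
      ((∃ N, ∀ m ≥ N, ∀ m' ≥ N, B ≤ gp p (z₁ m) (z₁ m')) ∨
        (∃ N, ∀ m ≥ N, dist (z₁ m) p ≤ B)) →
      ((∃ N, ∀ m ≥ N, ∀ m' ≥ N, B ≤ gp p (z₂ m) (z₂ m')) ∨
        (∃ N, ∀ m ≥ N, dist (z₂ m) p ≤ B)) →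
      ∃ γ : ℝ → X, IsBiInfGeod γ ∧ dist p (γ 0) ≤ R ∧
        ∃ N, ∀ (t : ℝ), ∀ m ≥ N, gp p (z₁ m) (γ t) ≤ B' ∧ gp p (z₂ m) (γ t) ≤ B' := by
  classical
  -- the admissible visual parameter
  set ε := min (1/2 : ℝ) (1/(20*(δ+1))) with hεdef
  have hd20 : (0:ℝ) < 20*(δ+1) := by linarith
  have hε : 0 < ε := lt_min (by norm_num) (by positivity)
  have hε1 : ε < 1 := lt_of_le_of_lt (min_le_left _ _) (by norm_num)
  have hεle : ε ≤ 1/(20*(δ+1)) := min_le_right _ _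
  have hε5 : ε * (5*δ) < 1 := by
    have h2 : ε * (5*δ) ≤ (1/(20*(δ+1))) * (5*δ) :=
      mul_le_mul_of_nonneg_right hεle (by linarith)
    have h3 : (1/(20*(δ+1))) * (5*δ) < 1 := by
      rw [one_div_mul_eq_div, div_lt_one hd20]
      linarith
    linarith
  have hlam : Real.exp (ε * (3*δ)) ^ 2 ≤ 2 := by
    have h2 : ε * (3*δ) ≤ (1/(20*(δ+1))) * (3*δ) :=
      mul_le_mul_of_nonneg_right hεle (by linarith)
    have h3 : (1/(20*(δ+1))) * (3*δ) ≤ 3/20 := by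
      rw [one_div_mul_eq_div, div_le_div_iff₀ hd20 (by norm_num)]
      linarith
    have hx : ε * (3*δ) + ε * (3*δ) ≤ Real.log 2 := by
      have := Real.log_two_gt_d9
      linarith
    calc Real.exp (ε * (3*δ)) ^ 2 = Real.exp (ε * (3*δ) + ε * (3*δ)) := by
          rw [sq, ← Real.exp_add]
      _ ≤ Real.exp (Real.log 2) := Real.exp_le_exp.2 hx
      _ = 2 := Real.exp_log (by norm_num)
  obtain ⟨w, C₀, hC₀, hdir⟩ := pole_directions hδ hgeo hhyp hpole
  obtain ⟨M, T₀, hM, hT₀, hP⟩ := perf_directions hδ hgeo hhyp hε hε1 hε5 hlam hperf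
  set E := 2*M + 6*δ + 1 with hE
  set Mplus := 2*E + M + 3*δ with hMplus
  set Cstar := C₀ + 3*M + 9*δ with hCstar
  set A' := T₀ + Mplus + 2*Cstar with hA'
  have hA'0 : 0 ≤ A' := by
    simp only [hA', hMplus, hE, hCstar]; linarith
  set B := A' + 6*δ + 1 with hB
  set B' := 2*B + 6*δ with hB'
  refine ⟨A' + 2*δ, B, B', by linarith, by linarith, by linarith, ?_⟩
  intro p z₁ z₂ hz₁ hz₂
  set T := max (dist w p) T₀ with hT
  have hTd : dist w p ≤ T := le_max_left _ _
  have hTT₀ : T₀ ≤ T := le_max_right _ _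
  have hTdT₀ : T - dist w p ≤ T₀ := by
    rcases max_cases (dist w p) T₀ with ⟨h1, h2⟩ | ⟨h1, h2⟩
    · rw [hT, h1]; linarith
    · rw [hT, h1]; linarith [dist_nonneg (x := w) (y := p)]
  obtain ⟨v₁, hv₁, hp1⟩ := hdir p
  obtain ⟨v₂, hv₂, h12L, h12B⟩ := hP v₁ hv₁ T hTT₀
  obtain ⟨v₃, hv₃, h23L, h23B⟩ := hP v₂ hv₂ (T+E) (by simp only [hE]; linarith)
  obtain ⟨v₄, hv₄, h34L, h34B⟩ := hP v₃ hv₃ (T+2*E) (by simp only [hE]; linarith)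
  -- all pairwise upper bounds at base w
  have h13L : EvL w v₁ v₃ (T - M - 3*δ) :=
    (chain_low hδ hgeo hhyp h12L h23L).mono (by
      have : T - M ≤ min (T - M) (T + E - M) := le_min (le_refl _) (by simp only [hE]; linarith)
      linarith)
  have h13B : EvB w v₁ v₃ (T + M + 3*δ) :=
    chain_up hδ hgeo hhyp h12B h23L.symm (by simp only [hE]; linarith)
  have h24L : EvL w v₂ v₄ (T + E - M - 3*δ) :=
    (chain_low hδ hgeo hhyp h23L h34L).mono (by
      have : T + E - M ≤ min (T + E - M) (T + 2*E - M) := le_min (le_refl _) (by linarith)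
      linarith)
  have h24B : EvB w v₂ v₄ (T + E + M + 3*δ) :=
    chain_up hδ hgeo hhyp h23B h34L.symm (by simp only [hE]; linarith)
  have h14B : EvB w v₁ v₄ (T + M + 3*δ) :=
    chain_up hδ hgeo hhyp h12B h24L.symm (by simp only [hE]; linarith)
  -- per-direction lower bounds on gp w p
  have hstep : ∀ {va vb : ℕ → X} {C L : ℝ}, (∃ N, ∀ n ≥ N, dist w p - C ≤ gp w p (va n)) →
      EvL w va vb L → (dist w p - (C + M) ≤ L) →
      ∃ N, ∀ n ≥ N, dist w p - (C + M + 3*δ) ≤ gp w p (vb n) := by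
    intro va vb C L h1 h2 hCL
    obtain ⟨N, hN⟩ := evl_point_chain hδ hgeo hhyp h1 h2
    refine ⟨N, fun n hn => le_trans ?_ (hN n hn)⟩
    have h3 : dist w p - (C + M) ≤ min (dist w p - C) L := le_min (by linarith) hCL
    linarith
  have hp2 : ∃ N, ∀ n ≥ N, dist w p - (C₀ + M + 3*δ) ≤ gp w p (v₂ n) :=
    hstep hp1 h12L (by linarith)
  have hp3 : ∃ N, ∀ n ≥ N, dist w p - (C₀ + M + 3*δ + M + 3*δ) ≤ gp w p (v₃ n) :=
    hstep hp2 h23L (by simp only [hE]; linarith)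
  have hp4 : ∃ N, ∀ n ≥ N, dist w p - (C₀ + M + 3*δ + M + 3*δ + M + 3*δ)
      ≤ gp w p (v₄ n) :=
    hstep hp3 h34L (by simp only [hE]; linarith)
  have hweak : ∀ {vv : ℕ → X} {C : ℝ}, C ≤ Cstar →
      (∃ N, ∀ n ≥ N, dist w p - C ≤ gp w p (vv n)) →
      ∃ N, ∀ n ≥ N, dist w p - Cstar ≤ gp w p (vv n) := by
    intro vv C hC h
    obtain ⟨N, hN⟩ := h
    exact ⟨N, fun n hn => le_trans (by linarith) (hN n hn)⟩
  have hp1' := hweak (show C₀ ≤ Cstar by simp only [hCstar]; linarith) hp1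
  have hp2' := hweak (show C₀ + M + 3*δ ≤ Cstar by simp only [hCstar]; linarith) hp2
  have hp3' := hweak (show C₀ + M + 3*δ + M + 3*δ ≤ Cstar by
    simp only [hCstar]; linarith) hp3
  have hp4' := hweak (show C₀ + M + 3*δ + M + 3*δ + M + 3*δ ≤ Cstar by
    simp only [hCstar]; linarith) hp4
  -- base-p pairwise bounds
  have hbase : ∀ {x y : ℕ → X} {G : ℝ}, EvB w x y G → G ≤ T + Mplus →
      (∃ N, ∀ n ≥ N, dist w p - Cstar ≤ gp w p (x n)) →
      (∃ N, ∀ n ≥ N, dist w p - Cstar ≤ gp w p (y n)) → EvB p x y A' := by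
    intro x y G hG hGle hx hy
    refine (base_change hδ hgeo hhyp (hG.mono hGle) hx hy).mono ?_
    simp only [hA']
    linarith
  have hb12 : EvB p v₁ v₂ A' := hbase h12B (by simp only [hMplus, hE]; linarith) hp1' hp2'
  have hb13 : EvB p v₁ v₃ A' := hbase h13B (by simp only [hMplus, hE]; linarith) hp1' hp3'
  have hb14 : EvB p v₁ v₄ A' := hbase h14B (by simp only [hMplus, hE]; linarith) hp1' hp4'
  have hb23 : EvB p v₂ v₃ A' := hbase h23B (by simp only [hMplus, hE]; linarith) hp2' hp3'
  have hb24 : EvB p v₂ v₄ A' := hbase h24B (by simp only [hMplus, hE]; linarith) hp2' hp4'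
  have hb34 : EvB p v₃ v₄ A' := hbase h34B (by simp only [hMplus, hE]; linarith) hp3' hp4'
  -- the four directions
  set V : Fin 4 → ℕ → X := fun i =>
    if i = 0 then v₁ else if i = 1 then v₂ else if i = 2 then v₃ else v₄ with hV
  have hVgrom : ∀ i, IsGromovSeq (V i) := by
    intro i
    fin_cases i <;> simp [hV, hv₁, hv₂, hv₃, hv₄]
  have hVpair : ∀ i j : Fin 4, i ≠ j → EvB p (V i) (V j) A' := by
    intro i j hij
    fin_cases i <;> fin_cases j <;>
      simp only [hV] <;>
      first
        | exact absurd rfl hij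
        | exact hb12 | exact hb12.symm | exact hb13 | exact hb13.symm
        | exact hb14 | exact hb14.symm | exact hb23 | exact hb23.symm
        | exact hb24 | exact hb24.symm | exact hb34 | exact hb34.symm
  -- tameness and selection
  set tame : (ℕ → X) → (ℕ → X) → Prop :=
    fun v z => ∃ N, ∀ m ≥ N, ∀ k ≥ N, gp p (z m) (v k) ≤ B with htame
  have hone : ∀ z : ℕ → X,
      ((∃ N, ∀ m ≥ N, ∀ m' ≥ N, B ≤ gp p (z m) (z m')) ∨
        (∃ N, ∀ m ≥ N, dist (z m) p ≤ B)) →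
      ∀ i j : Fin 4, ¬ tame (V i) z → ¬ tame (V j) z → i = j := by
    intro z hz i j hti htj
    by_contra hij
    rcases hz with hself | hsmall
    · obtain ⟨Ns, hNs⟩ := hself
      obtain ⟨Np, hNp⟩ := hVpair i j hij
      simp only [htame, not_exists] at hti htj
      push_neg at hti htj
      obtain ⟨m, hm, k, hk, hgt1⟩ := hti (max Ns Np)
      obtain ⟨m', hm', k', hk', hgt2⟩ := htj (max Ns Np)
      have hself1 : B ≤ gp p (z m) (z m') :=
        hNs m (le_trans (le_max_left _ _) hm) m' (le_trans (le_max_left _ _) hm')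
      have e1 := gp_min hδ hgeo hhyp p (z m) (z m') (V j k')
      have e2 := gp_min hδ hgeo hhyp p (V i k) (z m) (V j k')
      have hx1 : B - 3*δ ≤ gp p (z m) (V j k') := by
        have : min B B ≤ min (gp p (z m) (z m')) (gp p (z m') (V j k')) :=
          min_le_min hself1 (le_of_lt hgt2)
        rw [min_self] at this
        linarith
      have hx2 : B - 6*δ ≤ gp p (V i k) (V j k') := by
        have hcomm : B ≤ gp p (V i k) (z m) := by
          rw [gp_comm]; exact le_of_lt hgt1
        have : min B (B - 3*δ) ≤ min (gp p (V i k) (z m)) (gp p (z m) (V j k')) :=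
          min_le_min hcomm hx1
        have hmin2 : B - 3*δ ≤ min B (B - 3*δ) := le_min (by linarith) (le_refl _)
        linarith
      have hup := hNp k k' (le_trans (le_max_right _ _) hk) (le_trans (le_max_right _ _) hk')
      simp only [hB] at hx2
      linarith
    · obtain ⟨Ns, hNs⟩ := hsmall
      apply hti
      refine ⟨Ns, fun m hm k _ => ?_⟩
      exact le_trans (gp_le_left p (z m) (V i k)) (hNs m hm)
  have hsel : ∃ i j : Fin 4, i ≠ j ∧ tame (V i) z₁ ∧ tame (V i) z₂ ∧
      tame (V j) z₁ ∧ tame (V j) z₂ := by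
    classical
    have key := Finset.card_filter_add_card_filter_not
      (s := (Finset.univ : Finset (Fin 4)))
      (p := fun i => tame (V i) z₁ ∧ tame (V i) z₂)
    have c1 : (Finset.univ.filter (fun i : Fin 4 => ¬ tame (V i) z₁)).card ≤ 1 :=
      Finset.card_le_one.2 (fun a ha b hb =>
        hone z₁ hz₁ a b (Finset.mem_filter.1 ha).2 (Finset.mem_filter.1 hb).2)
    have c2 : (Finset.univ.filter (fun i : Fin 4 => ¬ tame (V i) z₂)).card ≤ 1 :=
      Finset.card_le_one.2 (fun a ha b hb =>
        hone z₂ hz₂ a b (Finset.mem_filter.1 ha).2 (Finset.mem_filter.1 hb).2)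
    have hsub : Finset.univ.filter
        (fun i : Fin 4 => ¬(tame (V i) z₁ ∧ tame (V i) z₂)) ⊆
        Finset.univ.filter (fun i : Fin 4 => ¬ tame (V i) z₁) ∪
        Finset.univ.filter (fun i : Fin 4 => ¬ tame (V i) z₂) := by
      intro i hi
      rw [Finset.mem_union, Finset.mem_filter, Finset.mem_filter]
      rcases not_and_or.1 (Finset.mem_filter.1 hi).2 with h | h
      · exact Or.inl ⟨Finset.mem_univ _, h⟩
      · exact Or.inr ⟨Finset.mem_univ _, h⟩
    have hcb : (Finset.univ.filter
        (fun i : Fin 4 => ¬(tame (V i) z₁ ∧ tame (V i) z₂))).card ≤ 2 := by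
      refine le_trans (Finset.card_le_card hsub) (le_trans (Finset.card_union_le _ _) ?_)
      omega
    have hcard4 : (Finset.univ : Finset (Fin 4)).card = 4 := by simp
    have hgood : 1 < (Finset.univ.filter
        (fun i : Fin 4 => tame (V i) z₁ ∧ tame (V i) z₂)).card := by omega
    obtain ⟨i, hi, j, hj, hij⟩ := Finset.one_lt_card.1 hgood
    have hi' := (Finset.mem_filter.1 hi).2
    have hj' := (Finset.mem_filter.1 hj).2
    exact ⟨i, j, hij, hi'.1, hi'.2, hj'.1, hj'.2⟩
  obtain ⟨i, j, hij, ht1i, ht2i, ht1j, ht2j⟩ := hsel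
  obtain ⟨N1, hN1⟩ := ht1i
  obtain ⟨N2, hN2⟩ := ht2i
  obtain ⟨N3, hN3⟩ := ht1j
  obtain ⟨N4, hN4⟩ := ht2j
  obtain ⟨N5, hN5⟩ := hVpair i j hij
  set Nbig := max (max (max N1 N2) (max N3 N4)) N5 with hNbig
  set x : ℕ → X := fun n => V i (Nbig + n) with hx
  set y : ℕ → X := fun n => V j (Nbig + n) with hy
  have hgpA : ∀ n, gp p (x n) (y n) ≤ A' := by
    intro n
    exact hN5 (Nbig + n) (Nbig + n) (le_trans (le_max_right _ _) (Nat.le_add_right _ _))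
      (le_trans (le_max_right _ _) (Nat.le_add_right _ _))
  have hdistp : ∀ (vv : ℕ → X), IsGromovSeq vv →
      Tendsto (fun n => dist p (vv (Nbig + n))) atTop atTop := by
    intro vv hvv
    apply Filter.tendsto_atTop.2
    intro b
    obtain ⟨N, hN⟩ := grom_diag hvv w (b + dist w p)
    rw [eventually_atTop]
    refine ⟨N, fun n hn => ?_⟩
    have h1 := hN (Nbig + n) (le_trans hn (Nat.le_add_left _ _))
    have h2 := dist_triangle (vv (Nbig + n)) p w
    have h3 := dist_comm p (vv (Nbig + n))
    have h4 := dist_comm w p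
    have h5 := dist_comm (vv (Nbig + n)) p
    linarith [dist_triangle (vv (Nbig+n)) w p, dist_comm (vv (Nbig+n)) w,
      dist_triangle w p (vv (Nbig+n))]
  obtain ⟨γ, σ, a, b, hγiso, hγ0, hab, hσiso, hends, hatop, hbtop, hconv⟩ :=
    line_limit hδ hgeo hhyp hgpA (hdistp (V i) (hVgrom i)) (hdistp (V j) (hVgrom j))
  have hNb1 : N1 ≤ Nbig := le_trans (le_trans (le_max_left _ _) (le_max_left _ _)) (le_max_left _ _)
  have hNb2 : N2 ≤ Nbig := le_trans (le_trans (le_max_right _ _) (le_max_left _ _)) (le_max_left _ _)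
  have hNb3 : N3 ≤ Nbig := le_trans (le_trans (le_max_left _ _) (le_max_right _ _)) (le_max_left _ _)
  have hNb4 : N4 ≤ Nbig := le_trans (le_trans (le_max_right _ _) (le_max_right _ _)) (le_max_left _ _)
  refine ⟨γ, hγiso, hγ0, Nbig, fun t m hm => ?_⟩
  have hsegbound : ∀ (z : ℕ → X), (∀ mm ≥ Nbig, ∀ k ≥ Nbig, gp p (z mm) (V i k) ≤ B) →
      (∀ mm ≥ Nbig, ∀ k ≥ Nbig, gp p (z mm) (V j k) ≤ B) →
      gp p (z m) (γ t) ≤ B' := by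
    intro z hzi hzj
    have hseg : ∀ n, gp p (z m) (σ n (max (a n) (min (b n) t))) ≤ B' := by
      intro n
      obtain ⟨mq, hma, hmb⟩ := hends n
      have habn := hab n
      have hxB : gp p (z m) (σ n (a n)) ≤ B := by
        rw [hma]
        exact hzi m hm (Nbig + mq) (Nat.le_add_right _ _)
      have hyB : gp p (z m) (σ n (b n)) ≤ B := by
        rw [hmb]
        exact hzj m hm (Nbig + mq) (Nat.le_add_right _ _)
      have := seg_gp_bound hδ hgeo hhyp (le_trans habn.1 habn.2) (hσiso n) hxB hyB
        (max (a n) (min (b n) t)) (clamp_mem (le_trans habn.1 habn.2))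
      simpa only [hB'] using this
    have hlim := gp_tendsto (p := p) (z := z m) (hconv t)
    exact le_of_tendsto hlim (Eventually.of_forall hseg)
  constructor
  · exact hsegbound z₁ (fun mm hmm k hk => hN1 mm (le_trans hNb1 hmm) k (le_trans hNb1 hk))
      (fun mm hmm k hk => hN3 mm (le_trans hNb3 hmm) k (le_trans hNb3 hk))
  · exact hsegbound z₂ (fun mm hmm k hk => hN2 mm (le_trans hNb2 hmm) k (le_trans hNb2 hk))
      (fun mm hmm k hk => hN4 mm (le_trans hNb4 hmm) k (le_trans hNb4 hk))

end Master





section Final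
variable [MetricSpace X] [ProperSpace X] {δ : ℝ}
variable (hδ : 0 ≤ δ) (hgeo : GeodesicSpace X) (hhyp : DeltaHyp X δ)
  (hpole : HasPole X) (hperf : BoundaryUniformlyPerfect X δ)
include hδ hgeo hhyp hpole hperf

lemma cond_one : ∃ r₁ r₂ : ℝ, RichCondOne X 0 r₁ r₂ := by
  obtain ⟨R, B, B', hR, hB, hB', hmain⟩ := master hδ hgeo hhyp hpole hperf
  refine ⟨R + 1, 2*B' + R + 1, ?_⟩
  intro p q _
  set zc : ℕ → X := fun _ => q with hzc
  have hz : ((∃ N, ∀ m ≥ N, ∀ m' ≥ N, B ≤ gp p (zc m) (zc m')) ∨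
      (∃ N, ∀ m ≥ N, dist (zc m) p ≤ B)) := by
    rcases le_total (dist q p) B with h | h
    · exact Or.inr ⟨0, fun m _ => h⟩
    · refine Or.inl ⟨0, fun m _ m' _ => ?_⟩
      show B ≤ gp p q q
      rw [gp_self]
      exact h
  obtain ⟨γ, hγiso, hγ0, N, hbound⟩ := hmain p zc zc hz hz
  refine ⟨γ, hγiso, ?_, ?_⟩
  · calc infDist p (range γ) ≤ dist p (γ 0) := infDist_le_dist_of_mem (mem_range_self 0)
      _ ≤ R := hγ0
      _ < R + 1 := by linarith
  · have hup : infDist q (range γ) ≤ dist p q + R := by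
      calc infDist q (range γ) ≤ dist q (γ 0) := infDist_le_dist_of_mem (mem_range_self 0)
        _ ≤ dist q p + dist p (γ 0) := dist_triangle _ _ _
        _ ≤ dist p q + R := by rw [dist_comm q p]; linarith
    have hlow : dist p q - 2*B' ≤ infDist q (range γ) := by
      by_contra hcon
      push_neg at hcon
      obtain ⟨z, hz', hdz⟩ := (infDist_lt_iff ⟨γ 0, mem_range_self 0⟩).1 hcon
      obtain ⟨t, rfl⟩ := hz'
      have hb := (hbound t N (le_refl _)).1
      have hde := dist_eq_gp p q (γ t)
      have := dist_nonneg (x := p) (y := γ t)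
      rw [dist_comm q p] at hde
      linarith
    have hnn : 0 ≤ infDist q (range γ) := infDist_nonneg
    rw [abs_lt]
    constructor <;> linarith

lemma cond_two : ∃ r₃ r₄ : ℝ, RichCondTwo X r₃ r₄ := by
  obtain ⟨R, B, B', hR, hB, hB', hmain⟩ := master hδ hgeo hhyp hpole hperf
  refine ⟨R + 1, 2*(2*B' + 6*δ) + R + 2, ?_⟩
  intro γℓ hγℓ p
  set z₁ : ℕ → X := fun m => γℓ m with hz₁def
  set z₂ : ℕ → X := fun m => γℓ (-(m:ℝ)) with hz₂def
  have hgp0 : ∀ s t : ℝ, 0 ≤ s → 0 ≤ t →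
      gp (γℓ 0) (γℓ s) (γℓ t) = min s t := by
    intro s t hs ht
    simp only [gp]
    rw [hγℓ s 0, hγℓ t 0, hγℓ s t, sub_zero, sub_zero, abs_of_nonneg hs, abs_of_nonneg ht]
    rcases le_total s t with h | h
    · rw [abs_of_nonpos (by linarith), min_eq_left h]; ring
    · rw [abs_of_nonneg (by linarith), min_eq_right h]; ring
  have hself : ∀ (f : ℕ → ℝ), (∀ m, 0 ≤ f m) → (∀ m : ℕ, (m:ℝ) ≤ f m) →
      (∃ N, ∀ m ≥ N, ∀ m' ≥ N, B ≤ gp p (γℓ (f m)) (γℓ (f m'))) := by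
    intro f hf0 hfm
    obtain ⟨Nn, hNn⟩ := exists_nat_ge (B + dist (γℓ 0) p)
    refine ⟨Nn, fun m hm m' hm' => ?_⟩
    have h1 := gp_base_lip hδ hgeo hhyp (γℓ 0) p (γℓ (f m)) (γℓ (f m'))
    have h2 : gp (γℓ 0) (γℓ (f m)) (γℓ (f m')) = min (f m) (f m') :=
      hgp0 _ _ (hf0 m) (hf0 m')
    have h3 : (Nn:ℝ) ≤ min (f m) (f m') := by
      apply le_min
      · exact le_trans (by exact_mod_cast hm) (hfm m)
      · exact le_trans (by exact_mod_cast hm') (hfm m')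
    linarith
  have hz₁ : ((∃ N, ∀ m ≥ N, ∀ m' ≥ N, B ≤ gp p (z₁ m) (z₁ m')) ∨
      (∃ N, ∀ m ≥ N, dist (z₁ m) p ≤ B)) := by
    left
    exact hself (fun m : ℕ => (m:ℝ)) (fun m => by positivity) (fun m => le_refl _)
  have hz₂ : ((∃ N, ∀ m ≥ N, ∀ m' ≥ N, B ≤ gp p (z₂ m) (z₂ m')) ∨
      (∃ N, ∀ m ≥ N, dist (z₂ m) p ≤ B)) := by
    left
    obtain ⟨Nn, hNn⟩ := exists_nat_ge (B + dist (γℓ (-(0:ℝ))) p)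
    refine ⟨Nn, fun m hm m' hm' => ?_⟩
    have hgp0' : gp (γℓ (-(0:ℝ))) (γℓ (-(m:ℝ))) (γℓ (-(m':ℝ))) = min (m:ℝ) (m':ℝ) := by
      simp only [gp]
      rw [hγℓ (-(m:ℝ)) (-(0:ℝ)), hγℓ (-(m':ℝ)) (-(0:ℝ)), hγℓ (-(m:ℝ)) (-(m':ℝ))]
      rw [show -(m:ℝ) - -(0:ℝ) = -(m:ℝ) by ring, show -(m':ℝ) - -(0:ℝ) = -(m':ℝ) by ring,
        abs_neg, abs_neg, abs_of_nonneg (by positivity : (0:ℝ) ≤ (m:ℝ)),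
        abs_of_nonneg (by positivity : (0:ℝ) ≤ (m':ℝ))]
      rcases le_total (m:ℝ) (m':ℝ) with h | h
      · rw [show -(m:ℝ) - -(m':ℝ) = (m':ℝ) - m by ring, abs_of_nonneg (by linarith),
          min_eq_left h]; ring
      · rw [show -(m:ℝ) - -(m':ℝ) = (m':ℝ) - m by ring, abs_of_nonpos (by linarith),
          min_eq_right h]; ring
    have h1 := gp_base_lip hδ hgeo hhyp (γℓ (-(0:ℝ))) p (γℓ (-(m:ℝ))) (γℓ (-(m':ℝ)))
    have h3 : (Nn:ℝ) ≤ min (m:ℝ) (m':ℝ) :=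
      le_min (by exact_mod_cast hm) (by exact_mod_cast hm')
    rw [hgp0'] at h1
    show B ≤ gp p (γℓ (-(m:ℝ))) (γℓ (-(m':ℝ)))
    linarith
  obtain ⟨γ', hγ'iso, hγ'0, N, hbound⟩ := hmain p z₁ z₂ hz₁ hz₂
  refine ⟨γ', hγ'iso, ?_, ?_⟩
  · calc infDist p (range γ') ≤ dist p (γ' 0) := infDist_le_dist_of_mem (mem_range_self 0)
      _ ≤ R := hγ'0
      _ < R + 1 := by linarith
  · set D := infDist p (range γℓ) with hD
    have hkey : ∀ t s : ℝ, D - 2*(2*B' + 6*δ) ≤ dist (γ' t) (γℓ s) := by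
      intro t s
      obtain ⟨m, hm1, hm2⟩ : ∃ m : ℕ, N ≤ m ∧ |s| ≤ (m:ℝ) := by
        obtain ⟨m₀, hm₀⟩ := exists_nat_ge |s|
        refine ⟨max N m₀, le_max_left _ _, le_trans hm₀ ?_⟩
        exact_mod_cast le_max_right _ _
      have habs := abs_le.1 hm2
      set σz : ℝ → X := fun r => γℓ (r - (m:ℝ)) with hσz
      have hiso : ∀ r ∈ Icc (0:ℝ) (2*(m:ℝ)), ∀ r' ∈ Icc (0:ℝ) (2*(m:ℝ)),
          dist (σz r) (σz r') = |r - r'| := by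
        intro r _ r' _
        rw [show σz r = γℓ (r - (m:ℝ)) from rfl, show σz r' = γℓ (r' - (m:ℝ)) from rfl,
          hγℓ]
        congr 1
        ring
      have hB0 : gp p (γ' t) (σz 0) ≤ B' := by
        have h := (hbound t m hm1).2
        rw [show σz 0 = γℓ (-(m:ℝ)) by show γℓ (0 - (m:ℝ)) = _; congr 1; ring]
        rw [gp_comm]
        exact h
      have hB1 : gp p (γ' t) (σz (2*(m:ℝ))) ≤ B' := by
        have h := (hbound t m hm1).1
        rw [show σz (2*(m:ℝ)) = γℓ (m:ℝ) by show γℓ (2*(m:ℝ) - (m:ℝ)) = _; congr 1; ring]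
        rw [gp_comm]
        exact h
      have hmem : s + (m:ℝ) ∈ Icc (0:ℝ) (2*(m:ℝ)) := ⟨by linarith, by linarith⟩
      have hsb := seg_gp_bound hδ hgeo hhyp (by positivity : (0:ℝ) ≤ 2*(m:ℝ))
        hiso hB0 hB1 (s + (m:ℝ)) hmem
      have hσzs : σz (s + (m:ℝ)) = γℓ s := by
        show γℓ (s + (m:ℝ) - (m:ℝ)) = _; congr 1; ring
      rw [hσzs] at hsb
      have hDle : D ≤ dist p (γℓ s) := infDist_le_dist_of_mem (mem_range_self s)
      have hde := dist_eq_gp p (γ' t) (γℓ s)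
      have h0 := dist_nonneg (x := γ' t) (y := p)
      rw [dist_comm (γ' t) p] at hde
      linarith [dist_nonneg (x := (γ' t)) (y := p), hde,
        dist_comm p (γ' t)]
    have hne : {r | ∃ s t : ℝ, r = dist (γ' s) (γℓ t)}.Nonempty :=
      ⟨dist (γ' 0) (γℓ 0), 0, 0, rfl⟩
    have hbdd : BddBelow {r | ∃ s t : ℝ, r = dist (γ' s) (γℓ t)} := by
      refine ⟨0, ?_⟩
      rintro r ⟨s, t, rfl⟩
      exact dist_nonneg
    have hlow : D - 2*(2*B' + 6*δ) ≤ lineDist γ' γℓ := by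
      apply le_csInf hne
      rintro r ⟨s, t, rfl⟩
      exact hkey s t
    have hDnn : 0 ≤ D := infDist_nonneg
    have hDlt : infDist p (range γℓ) < D + 1 := by rw [← hD]; linarith
    obtain ⟨z, hzmem, hzd⟩ := (infDist_lt_iff ⟨γℓ 0, mem_range_self 0⟩).1 hDlt
    obtain ⟨t₀, rfl⟩ := hzmem
    have hup : lineDist γ' γℓ ≤ R + D + 1 := by
      have h1 : lineDist γ' γℓ ≤ dist (γ' 0) (γℓ t₀) := csInf_le hbdd ⟨0, t₀, rfl⟩
      have h2 : dist (γ' 0) (γℓ t₀) ≤ dist (γ' 0) p + dist p (γℓ t₀) := dist_triangle _ _ _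
      rw [dist_comm (γ' 0) p] at h2
      linarith
    rw [abs_lt]
    constructor <;> [linarith; linarith]

end Final


/-- **Proposition 4.4.** A proper geodesic δ-hyperbolic space with a pole whose Gromov
boundary is uniformly perfect is geodesically rich. -/
theorem geodesicallyRich_of_boundaryUniformlyPerfect
    (X : Type*) [MetricSpace X] [ProperSpace X] (δ : ℝ) (hδ : 0 ≤ δ)
    (hgeo : GeodesicSpace X) (hhyp : DeltaHyp X δ) (hpole : HasPole X)
    (hperf : BoundaryUniformlyPerfect X δ) :
    GeodesicallyRich X := by
  obtain ⟨r₁, r₂, h1⟩ := cond_one hδ hgeo hhyp hpole hperf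
  obtain ⟨r₃, r₄, h2⟩ := cond_two hδ hgeo hhyp hpole hperf
  exact ⟨0, r₁, r₂, r₃, r₄, h1, h2⟩

end BoundaryRigidity
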